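/- arXiv:2109.05690 — 4 statements merged into one kernel-verified Lean document; each statement's English description precedes it below -/
import Mathlib

section
/- One-step estimate for the inertial method v-iBPG: under the standing assumptions and the restricted relative smoothness exponent assumption, for the v-iBPG iterates, any k ≥ 0 and any x ∈ dom P ∩ dom φ, ((1−θ_{k+1})/θ_{k+1}^γ)·(F(x^{k+1}) − F(x)) + τL·D_φ(x, z^{k+1}) ≤ ((1−θ_k)/θ_k^γ)·(F(x^k) − F(x)) + τL·D_φ(x, z^k) + e(x)·ϑ_{k+1} + θ_k^{1−γ}·η_k·‖z̃^{k+1} − x‖ + τL·μ_k + θ_k^{1−γ}·ν_k, where e(x) := F(x) − F* and ϑ_{k+1} := θ_k^{−γ} − (1−θ_{k+1})·θ_{k+1}^{−γ}. -/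
open Filter Topology RealInnerProductSpace

lemma convex_grad_ineq {E : Type*} [NormedAddCommGroup E] [InnerProductSpace ℝ E] [FiniteDimensional ℝ E]
    {s : Set E} {f : E → ℝ} (hf : ConvexOn ℝ s f) {y u : E} (hy : y ∈ s) (hu : u ∈ s)
    {g : E} (hg : HasGradientAt f g y) : ⟪g, u - y⟫ ≤ f u - f y := by
  set c : ℝ → E := fun t => y + t • (u - y) with hc
  have hc0 : c 0 = y := by simp [hc]
  have hcd : HasDerivAt c (u - y) 0 := by
    rw [hc]; simpa using ((hasDerivAt_id (0:ℝ)).smul_const (u - y)).const_add y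
  have hF : HasFDerivAt f ((InnerProductSpace.toDual ℝ E) g) y := hg.hasFDerivAt
  have hcomp : HasDerivAt (f ∘ c) ⟪g, u - y⟫ 0 := by
    have := (hc0 ▸ hF).comp_hasDerivAt 0 hcd
    simpa [InnerProductSpace.toDual_apply_apply] using this
  have hslope : Tendsto (slope (f ∘ c) 0) (𝓝[>] 0) (𝓝 ⟪g, u - y⟫) := by
    refine (hasDerivAt_iff_tendsto_slope.mp hcomp).mono_left (nhdsWithin_mono _ ?_)
    intro t ht
    exact ne_of_gt ht
  refine le_of_tendsto hslope ?_
  filter_upwards [Ioc_mem_nhdsGT (zero_lt_one (α := ℝ))] with t ht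
  have hct : c t = (1 - t) • y + t • u := by
    simp [hc]; module
  have hconv : f (c t) ≤ (1 - t) * f y + t * f u := by
    rw [hct]
    exact hf.2 hy hu (by linarith [ht.2]) ht.1.le (by ring)
  rw [slope_def_field]
  rw [div_le_iff₀ (by simpa using ht.1)]
  simp only [Function.comp, hc0]
  nlinarith [ht.1]

/-- The Bregman distance associated with the kernel `φ` whose gradient map is `gφ`. -/
noncomputable def breg {E : Type*} [NormedAddCommGroup E] [InnerProductSpace ℝ E]
    (φ : E → ℝ) (gφ : E → E) (x y : E) : ℝ :=
  φ x - φ y - ⟪gφ y, x - y⟫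

/-- The ν-subdifferential of `P` (a proper function with effective domain `domP`) at `x`. -/
def nuSubdiff {E : Type*} [NormedAddCommGroup E] [InnerProductSpace ℝ E]
    (P : E → ℝ) (domP : Set E) (ν : ℝ) (x : E) : Set E :=
  {d : E | ∀ u ∈ domP, P x + ⟪d, u - x⟫ - ν ≤ P u}

open Classical in
/-- Extension of a real-valued function with effective domain `dom` to an `EReal`-valued
function taking the value `⊤` outside `dom`. -/
noncomputable def extFun {E : Type*} (g : E → ℝ) (dom : Set E) : E → EReal :=
  fun x => if x ∈ dom then (g x : EReal) else ⊤

/-- `φ` (with effective domain `domφ` and gradient map `gφ`) is essentially smooth. -/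
def EssentiallySmooth {E : Type*} [NormedAddCommGroup E] [InnerProductSpace ℝ E]
    [FiniteDimensional ℝ E] (φ : E → ℝ) (domφ : Set E) (gφ : E → E) : Prop :=
  (interior domφ).Nonempty ∧
  (∀ x ∈ interior domφ, HasGradientAt φ (gφ x) x) ∧
  ∀ (u : ℕ → E) (u₀ : E), (∀ n, u n ∈ interior domφ) →
    Tendsto u atTop (𝓝 u₀) → u₀ ∈ frontier (interior domφ) →
    Tendsto (fun n => ‖gφ (u n)‖) atTop atTop

/-- The standing assumptions (Assumption A) for the problem `inf {P x + f x : x ∈ Q}`. -/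
structure Standing {E : Type*} [NormedAddCommGroup E] [InnerProductSpace ℝ E]
    [FiniteDimensional ℝ E] (Q domφ domP domf X : Set E)
    (φ P f : E → ℝ) (gφ gf : E → E) (L : ℝ) : Prop where
  hQclosed : IsClosed Q
  hQconv : Convex ℝ Q
  hQint : (interior Q).Nonempty
  hφconv : ConvexOn ℝ domφ φ
  hφstrict : StrictConvexOn ℝ (interior domφ) φ
  hφsmooth : EssentiallySmooth φ domφ gφ
  hφQ : closure domφ = Q
  hPne : domP.Nonempty
  hPconv : ConvexOn ℝ domP P
  hPclosed : LowerSemicontinuous (extFun P domP)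
  hPQ : (domP ∩ interior Q).Nonempty
  hfconv : ConvexOn ℝ domf f
  hfclosed : LowerSemicontinuous (extFun f domf)
  hfdom : domφ ⊆ domf
  hfgrad : ∀ x ∈ interior domφ, HasGradientAt f (gf x) x
  hXclosed : IsClosed X
  hXconv : Convex ℝ X
  hXsup : domP ∩ domφ ⊆ X
  hLnn : 0 ≤ L
  hrel : ∀ u ∈ interior domφ ∩ X, ∀ v ∈ domφ ∩ X,
    f v ≤ f u + ⟪gf u, v - u⟫ + L * breg φ gφ v u

/-- Conditions on the inertial parameter sequence `{θ_k}` (with `θ_{−1} = θ_0 = 1`; the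
sequence is represented over `ℕ`, using truncated subtraction so that `θ (k-1)` at `k = 0`
stands for `θ_{−1} = 1`): `θ_k ∈ (0,1]`, `θ_k ≤ (α−1)/(k+α−1)` for all `k ≥ 1`, where
`α ≥ γ+1`, and `ϑ_k := θ_{k−1}^{−γ} − (1−θ_k)·θ_k^{−γ} ≥ 0` for all `k ≥ 1`. -/
def ThetaSeq (γ α : ℝ) (θ : ℕ → ℝ) : Prop :=
  θ 0 = 1 ∧ (∀ k, θ k ∈ Set.Ioc (0:ℝ) 1) ∧ γ + 1 ≤ α ∧
  (∀ k : ℕ, 1 ≤ k → θ k ≤ (α - 1) / ((k : ℝ) + α - 1)) ∧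
  (∀ k : ℕ, 1 ≤ k → 0 ≤ (θ (k-1)) ^ (-γ) - (1 - θ k) * (θ k) ^ (-γ))

/-- The restricted relative smoothness exponent assumption (Assumption C): there are `τ > 0`
and `γ ≥ 1` such that
`D_f((1−θ)x + θz̃, (1−θ)x + θz) ≤ τ L θ^γ D_φ(z̃, z)` for all `x, z̃ ∈ dom P ∩ dom φ`,
`z ∈ int dom φ ∩ X` and `θ ∈ (0,1]`. -/
def RestrictedRelSmoothExponent {E : Type*} [NormedAddCommGroup E] [InnerProductSpace ℝ E]
    (domφ domP X : Set E) (φ f : E → ℝ) (gφ gf : E → E) (L τ γ : ℝ) : Prop :=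
  0 < τ ∧ 1 ≤ γ ∧
  ∀ xx ∈ domP ∩ domφ, ∀ zt ∈ domP ∩ domφ, ∀ z ∈ interior domφ ∩ X, ∀ θ : ℝ,
    θ ∈ Set.Ioc (0:ℝ) 1 →
    breg f gf ((1 - θ) • xx + θ • zt) ((1 - θ) • xx + θ • z) ≤
      τ * L * θ ^ γ * breg φ gφ zt z

/-- The v-iBPG iterates with parameter sequence `θ` and inexactness tolerance sequences
`η`, `μ`, `ν`. -/
structure VIBPGIter {E : Type*} [NormedAddCommGroup E] [InnerProductSpace ℝ E]
    [FiniteDimensional ℝ E] (domφ domP X : Set E) (φ P : E → ℝ) (gφ gf : E → E)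
    (L τ γ : ℝ) (θ η μ ν : ℕ → ℝ) (x y z zt : ℕ → E) : Prop where
  hη : ∀ k, 0 ≤ η k
  hμ : ∀ k, 0 ≤ μ k
  hν : ∀ k, 0 ≤ ν k
  hx0 : x 0 ∈ domP ∩ domφ
  hy : ∀ k, y k = (1 - θ k) • x k + θ k • z k
  hz : ∀ k, z k ∈ X ∩ interior domφ
  hzt : ∀ k, zt (k+1) ∈ domP ∩ domφ
  hinex : ∀ k, ∃ d ∈ nuSubdiff P domP (ν k) (zt (k+1)),
    ‖d + gf (y k) + (τ * L * θ k ^ (γ - 1)) • (gφ (z (k+1)) - gφ (z k))‖ ≤ η k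
  hdist : ∀ k, breg φ gφ (zt (k+1)) (z (k+1)) ≤ μ k
  hxrec : ∀ k, x (k+1) = (1 - θ k) • x k + θ k • zt (k+1)

/-- **One-step estimate for v-iBPG** (Lemma 4.2). Under the standing assumptions and the
restricted relative smoothness exponent assumption, for the v-iBPG iterates, any `k ≥ 0` and
any `x ∈ dom P ∩ dom φ`,
`((1−θ_{k+1})/θ_{k+1}^γ)(F(x^{k+1}) − F(x)) + τL D_φ(x, z^{k+1}) ≤
 ((1−θ_k)/θ_k^γ)(F(x^k) − F(x)) + τL D_φ(x, z^k) + e(x) ϑ_{k+1}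
 + θ_k^{1−γ} η_k ‖z̃^{k+1} − x‖ + τL μ_k + θ_k^{1−γ} ν_k`,
where `F = P + f`, `e(x) := F(x) − F*` and `ϑ_{k+1} := θ_k^{−γ} − (1−θ_{k+1})θ_{k+1}^{−γ}`. -/
theorem vIBPG_one_step_estimate
    {E : Type*} [NormedAddCommGroup E] [InnerProductSpace ℝ E] [FiniteDimensional ℝ E]
    (Q domφ domP domf X : Set E) (φ P f : E → ℝ) (gφ gf : E → E) (L τ γ α : ℝ)
    (hstand : Standing Q domφ domP domf X φ P f gφ gf L)
    (hrrse : RestrictedRelSmoothExponent domφ domP X φ f gφ gf L τ γ)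
    (θ η μ ν : ℕ → ℝ) (hθ : ThetaSeq γ α θ)
    (x y z zt : ℕ → E)
    (hiter : VIBPGIter domφ domP X φ P gφ gf L τ γ θ η μ ν x y z zt)
    (Fstar : ℝ) (hFstar : IsGLB ((fun u => P u + f u) '' (domP ∩ domf ∩ Q)) Fstar) :
    ∀ (k : ℕ), ∀ xx ∈ domP ∩ domφ,
      (1 - θ (k+1)) / θ (k+1) ^ γ * ((P (x (k+1)) + f (x (k+1))) - (P xx + f xx))
          + τ * L * breg φ gφ xx (z (k+1)) ≤
        (1 - θ k) / θ k ^ γ * ((P (x k) + f (x k)) - (P xx + f xx))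
          + τ * L * breg φ gφ xx (z k)
          + (P xx + f xx - Fstar) * (θ k ^ (-γ) - (1 - θ (k+1)) * θ (k+1) ^ (-γ))
          + θ k ^ (1 - γ) * η k * ‖zt (k+1) - xx‖
          + τ * L * μ k + θ k ^ (1 - γ) * ν k := by
  obtain ⟨hθ0, hIoc, hα, hbnd, hϑ0⟩ := hθ
  obtain ⟨hτ, hγ, hsm⟩ := hrrse
  intro k xx hxx
  have ht : 0 < θ k := (hIoc k).1
  have ht1 : θ k ≤ 1 := (hIoc k).2
  have hs : 0 < θ (k+1) := (hIoc (k+1)).1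
  -- membership of iterates
  have hCpf : Convex ℝ (domP ∩ domφ) := hstand.hPconv.1.inter hstand.hφconv.1
  have hxmem : ∀ n, x n ∈ domP ∩ domφ := by
    intro n
    induction n with
    | zero => exact hiter.hx0
    | succ m ih =>
      rw [hiter.hxrec m]
      exact hCpf ih (hiter.hzt m)
        (by linarith [(hIoc m).2]) (hIoc m).1.le (by ring)
  -- y k in interior of domφ
  have hYint : y k ∈ interior domφ := by
    rw [hiter.hy k]
    exact hstand.hφconv.1.combo_self_interior_mem_interior (hxmem k).2 (hiter.hz k).2
      (by linarith) ht (by ring)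
  have hgY : HasGradientAt f (gf (y k)) (y k) := hstand.hfgrad _ hYint
  -- the inexact subgradient
  obtain ⟨d, hd, hΔ⟩ := hiter.hinex k
  -- rpow facts
  have htγ : (0:ℝ) < θ k ^ γ := Real.rpow_pos_of_pos ht γ
  have hr : (0:ℝ) < θ k ^ (-γ) := Real.rpow_pos_of_pos ht _
  have hrK : θ k ^ (-γ) * θ k ^ γ = 1 := by
    rw [← Real.rpow_add ht]; simp
  have hct : θ k ^ (γ - 1) * θ k = θ k ^ γ := by
    nth_rewrite 2 [← Real.rpow_one (θ k)]
    rw [← Real.rpow_add ht]; ring_nf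
  have hrt : θ k ^ (-γ) * θ k = θ k ^ (1 - γ) := by
    nth_rewrite 2 [← Real.rpow_one (θ k)]
    rw [← Real.rpow_add ht]; ring_nf
  have hq1 : (1 - θ k) / θ k ^ γ = (1 - θ k) * θ k ^ (-γ) := by
    rw [Real.rpow_neg ht.le, div_eq_mul_inv]
  have hq2 : (1 - θ (k+1)) / θ (k+1) ^ γ = (1 - θ (k+1)) * θ (k+1) ^ (-γ) := by
    rw [Real.rpow_neg hs.le, div_eq_mul_inv]
  have hKnn : (0:ℝ) ≤ τ * L * θ k ^ γ := mul_nonneg (mul_nonneg hτ.le hstand.hLnn) htγ.le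
  -- (B) relative smoothness
  have hB := hsm (x k) (hxmem k) (zt (k+1)) (hiter.hzt k) (z k)
    ⟨(hiter.hz k).2, (hiter.hz k).1⟩ (θ k) (hIoc k)
  rw [← hiter.hxrec k, ← hiter.hy k] at hB
  have hBd : breg f gf (x (k+1)) (y k)
      = f (x (k+1)) - f (y k) - ⟪gf (y k), x (k+1) - y k⟫ := rfl
  rw [hBd] at hB
  -- gradient inequalities (C), (D)
  have hC : ⟪gf (y k), x k - y k⟫ ≤ f (x k) - f (y k) :=
    convex_grad_ineq hstand.hfconv (hstand.hfdom (interior_subset hYint))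
      (hstand.hfdom (hxmem k).2) hgY
  have hD : ⟪gf (y k), xx - y k⟫ ≤ f xx - f (y k) :=
    convex_grad_ineq hstand.hfconv (hstand.hfdom (interior_subset hYint))
      (hstand.hfdom hxx.2) hgY
  -- (E) nu-subgradient inequality
  have hE := hd xx hxx.1
  -- (F) Cauchy-Schwarz bound on the residual
  have hF0 : ⟪d + gf (y k) + (τ * L * θ k ^ (γ - 1)) • (gφ (z (k+1)) - gφ (z k)),
      zt (k+1) - xx⟫ ≤ η k * ‖zt (k+1) - xx‖ :=
    le_trans (real_inner_le_norm _ _) (mul_le_mul_of_nonneg_right hΔ (norm_nonneg _))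
  have hFexp : ⟪d + gf (y k) + (τ * L * θ k ^ (γ - 1)) • (gφ (z (k+1)) - gφ (z k)),
      zt (k+1) - xx⟫
      = -⟪d, xx - zt (k+1)⟫ + (⟪gf (y k), zt (k+1) - y k⟫ - ⟪gf (y k), xx - y k⟫)
        - (τ * L * θ k ^ (γ - 1)) * ⟪gφ (z (k+1)) - gφ (z k), xx - zt (k+1)⟫ := by
    simp only [inner_add_left, inner_sub_left, inner_sub_right, real_inner_smul_left]
    ring
  rw [hFexp] at hF0
  -- (A) convexity of P
  have hA : P (x (k+1)) ≤ (1 - θ k) * P (x k) + θ k * P (zt (k+1)) := by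
    rw [hiter.hxrec k]
    exact hstand.hPconv.2 (hxmem k).1 (hiter.hzt k).1 (by linarith) ht.le (by ring)
  -- inner product decomposition for x^{k+1} - y^k
  have hveq : x (k+1) - y k = (1 - θ k) • (x k - y k) + θ k • (zt (k+1) - y k) := by
    rw [hiter.hxrec k, hiter.hy k]; module
  have hinner1 : ⟪gf (y k), x (k+1) - y k⟫
      = (1 - θ k) * ⟪gf (y k), x k - y k⟫ + θ k * ⟪gf (y k), zt (k+1) - y k⟫ := by
    rw [hveq, inner_add_right, real_inner_smul_right, real_inner_smul_right]
  -- three-point identity (G)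
  have hG : ⟪gφ (z (k+1)) - gφ (z k), xx - zt (k+1)⟫
      = breg φ gφ xx (z k) - breg φ gφ xx (z (k+1))
        - breg φ gφ (zt (k+1)) (z k) + breg φ gφ (zt (k+1)) (z (k+1)) := by
    simp only [breg, inner_sub_left, inner_sub_right]
    ring
  have hH := hiter.hdist k
  -- scaled inequalities
  have m1 : (1 - θ k) * ⟪gf (y k), x k - y k⟫ ≤ (1 - θ k) * (f (x k) - f (y k)) :=
    mul_le_mul_of_nonneg_left hC (by linarith)
  have m2 : θ k * ⟪gf (y k), xx - y k⟫ ≤ θ k * (f xx - f (y k)) :=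
    mul_le_mul_of_nonneg_left hD ht.le
  have m3 : θ k * (-⟪d, xx - zt (k+1)⟫
        + (⟪gf (y k), zt (k+1) - y k⟫ - ⟪gf (y k), xx - y k⟫)
        - (τ * L * θ k ^ (γ - 1)) * ⟪gφ (z (k+1)) - gφ (z k), xx - zt (k+1)⟫)
      ≤ θ k * (η k * ‖zt (k+1) - xx‖) :=
    mul_le_mul_of_nonneg_left hF0 ht.le
  have m4 : θ k * ⟪d, xx - zt (k+1)⟫ ≤ θ k * (P xx - P (zt (k+1)) + ν k) :=
    mul_le_mul_of_nonneg_left (by linarith) ht.le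
  have m5 : τ * L * θ k ^ γ * breg φ gφ (zt (k+1)) (z (k+1)) ≤ τ * L * θ k ^ γ * μ k :=
    mul_le_mul_of_nonneg_left hH hKnn
  have pc : θ k * ((τ * L * θ k ^ (γ - 1)) * ⟪gφ (z (k+1)) - gφ (z k), xx - zt (k+1)⟫)
      = τ * L * θ k ^ γ * ⟪gφ (z (k+1)) - gφ (z k), xx - zt (k+1)⟫ := by
    rw [show θ k * ((τ * L * θ k ^ (γ - 1)) * ⟪gφ (z (k+1)) - gφ (z k), xx - zt (k+1)⟫)
        = τ * L * (θ k ^ (γ - 1) * θ k) * ⟪gφ (z (k+1)) - gφ (z k), xx - zt (k+1)⟫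
      from by ring, hct]
  have pG : τ * L * θ k ^ γ * ⟪gφ (z (k+1)) - gφ (z k), xx - zt (k+1)⟫
      = τ * L * θ k ^ γ * breg φ gφ xx (z k) - τ * L * θ k ^ γ * breg φ gφ xx (z (k+1))
        - τ * L * θ k ^ γ * breg φ gφ (zt (k+1)) (z k)
        + τ * L * θ k ^ γ * breg φ gφ (zt (k+1)) (z (k+1)) := by
    rw [hG]; ring
  -- master one-step inequality
  have hstar : P (x (k+1)) + f (x (k+1)) - (P xx + f xx)
      ≤ (1 - θ k) * (P (x k) + f (x k) - (P xx + f xx))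
        + θ k * (η k * ‖zt (k+1) - xx‖)
        + τ * L * θ k ^ γ * (breg φ gφ xx (z k) - breg φ gφ xx (z (k+1)))
        + τ * L * θ k ^ γ * μ k + θ k * ν k := by
    linarith [hB, hinner1, m1, m2, m3, m4, m5, pc, pG, hA]
  -- multiply by θ k ^ (-γ)
  have h2 := mul_le_mul_of_nonneg_left hstar hr.le
  have h3 : θ k ^ (-γ) * (P (x (k+1)) + f (x (k+1)) - (P xx + f xx))
      ≤ (1 - θ k) * θ k ^ (-γ) * (P (x k) + f (x k) - (P xx + f xx))
        + θ k ^ (1 - γ) * (η k * ‖zt (k+1) - xx‖)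
        + τ * L * breg φ gφ xx (z k) - τ * L * breg φ gφ xx (z (k+1))
        + τ * L * μ k + θ k ^ (1 - γ) * ν k := by
    calc θ k ^ (-γ) * (P (x (k+1)) + f (x (k+1)) - (P xx + f xx))
        ≤ θ k ^ (-γ) * ((1 - θ k) * (P (x k) + f (x k) - (P xx + f xx))
            + θ k * (η k * ‖zt (k+1) - xx‖)
            + τ * L * θ k ^ γ * (breg φ gφ xx (z k) - breg φ gφ xx (z (k+1)))
            + τ * L * θ k ^ γ * μ k + θ k * ν k) := h2
      _ = (1 - θ k) * θ k ^ (-γ) * (P (x k) + f (x k) - (P xx + f xx))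
            + (θ k ^ (-γ) * θ k) * (η k * ‖zt (k+1) - xx‖)
            + (θ k ^ (-γ) * θ k ^ γ) * (τ * L * breg φ gφ xx (z k))
            - (θ k ^ (-γ) * θ k ^ γ) * (τ * L * breg φ gφ xx (z (k+1)))
            + (θ k ^ (-γ) * θ k ^ γ) * (τ * L * μ k)
            + (θ k ^ (-γ) * θ k) * ν k := by ring
      _ = _ := by rw [hrt, hrK]; ring
  -- lower bound via Fstar
  have hlow : Fstar ≤ P (x (k+1)) + f (x (k+1)) := by
    refine hFstar.1 ⟨x (k+1), ⟨⟨(hxmem (k+1)).1, hstand.hfdom (hxmem (k+1)).2⟩, ?_⟩, rfl⟩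
    rw [← hstand.hφQ]
    exact subset_closure (hxmem (k+1)).2
  have hϑnn : 0 ≤ θ k ^ (-γ) - (1 - θ (k+1)) * θ (k+1) ^ (-γ) := by
    simpa using hϑ0 (k+1) (by omega)
  have hdec : (1 - θ (k+1)) / θ (k+1) ^ γ * (P (x (k+1)) + f (x (k+1)) - (P xx + f xx))
      = θ k ^ (-γ) * (P (x (k+1)) + f (x (k+1)) - (P xx + f xx))
        - (θ k ^ (-γ) - (1 - θ (k+1)) * θ (k+1) ^ (-γ))
          * (P (x (k+1)) + f (x (k+1)) - (P xx + f xx)) := by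
    rw [hq2]; ring
  have hdec2 : (1 - θ k) / θ k ^ γ * (P (x k) + f (x k) - (P xx + f xx))
      = (1 - θ k) * θ k ^ (-γ) * (P (x k) + f (x k) - (P xx + f xx)) := by
    rw [hq1]
  have h4 : (θ k ^ (-γ) - (1 - θ (k+1)) * θ (k+1) ^ (-γ))
        * (-(P (x (k+1)) + f (x (k+1)) - (P xx + f xx)))
      ≤ (θ k ^ (-γ) - (1 - θ (k+1)) * θ (k+1) ^ (-γ)) * (P xx + f xx - Fstar) :=
    mul_le_mul_of_nonneg_left (by linarith) hϑnn
  linarith [h3, hdec, hdec2, h4]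
end

section
/- Telescoped bound for v-iBPG: under the standing assumptions and the restricted relative smoothness exponent assumption, for the v-iBPG iterates, any k ≥ 0 and any x ∈ dom P ∩ dom φ, F(x^{k+1}) − F(x) ≤ ((α−1)/(k+α−1))^γ · ( τL·D_φ(x, z^0) + e(x)·Σ_{i=0}^{k} ϑ_i + Σ_{i=0}^{k} ( θ_i^{1−γ}·η_i·‖z̃^{i+1}‖ + θ_i^{1−γ}·η_i·‖x‖ + τL·μ_i + θ_i^{1−γ}·ν_i ) ), where e(x) := F(x) − F* and ϑ_{k+1} := θ_k^{−γ} − (1−θ_{k+1})·θ_{k+1}^{−γ}. -/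
set_option maxHeartbeats 1000000


open Filter Topology RealInnerProductSpace

/-- Gradient inequality for a convex function at a point where it has a gradient. -/
lemma convexOn_grad_ineq {E : Type*} [NormedAddCommGroup E] [InnerProductSpace ℝ E]
    [FiniteDimensional ℝ E] {s : Set E} {g : E → ℝ} (hg : ConvexOn ℝ s g)
    {y G : E} (hgrad : HasGradientAt g G y) (hy : y ∈ s) {u : E} (hu : u ∈ s) :
    g y + ⟪G, u - y⟫ ≤ g u := by
  set v := u - y with hv
  have hc : HasDerivAt (fun t : ℝ => y + t • v) v 0 := by
    simpa using ((hasDerivAt_id (0 : ℝ)).smul_const v).const_add y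
  have h0 : y + (0 : ℝ) • v = y := by simp
  have hg' : HasFDerivAt g (InnerProductSpace.toDual ℝ E G) (y + (0 : ℝ) • v) := by
    rw [h0]; exact hgrad.hasFDerivAt
  have hψ : HasDerivAt (fun t : ℝ => g (y + t • v)) ⟪G, v⟫ 0 := by
    have := hg'.comp_hasDerivAt 0 hc
    simp only [InnerProductSpace.toDual_apply_apply] at this
    exact this
  have htend : Tendsto (slope (fun t : ℝ => g (y + t • v)) 0) (𝓝[>] (0 : ℝ))
      (𝓝 ⟪G, v⟫) := by
    refine (hasDerivAt_iff_tendsto_slope.mp hψ).mono_left (nhdsWithin_mono 0 ?_)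
    intro t ht
    exact ne_of_gt ht
  have hub : ∀ᶠ t in 𝓝[>] (0 : ℝ),
      slope (fun t : ℝ => g (y + t • v)) 0 t ≤ g u - g y := by
    filter_upwards [Ioc_mem_nhdsGT_of_mem (Set.mem_Ico.mpr ⟨le_refl (0 : ℝ), one_pos⟩)]
      with t ht
    have ht0 : 0 < t := ht.1
    have hpt : (1 - t) • y + t • u = y + t • v := by
      rw [hv]; module
    have hcomb : g (y + t • v) ≤ (1 - t) * g y + t * g u := by
      rw [← hpt]
      exact hg.2 hy hu (by linarith [ht.2]) ht0.le (by ring)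
    rw [slope_def_field]
    rw [div_le_iff₀ (by linarith : (0:ℝ) < t - 0)]
    simp only [zero_smul, add_zero]
    nlinarith [hcomb]
  have hfin := le_of_tendsto htend hub
  have : ⟪G, v⟫ ≤ g u - g y := hfin
  rw [hv] at this
  linarith

/-- **Telescoped bound for v-iBPG** (Theorem 4.1(i)). Under the standing assumptions and the
restricted relative smoothness exponent assumption, for the v-iBPG iterates, any `k ≥ 0` and
any `x ∈ dom P ∩ dom φ`,
`F(x^{k+1}) − F(x) ≤ ((α−1)/(k+α−1))^γ (τL D_φ(x, z^0) + e(x) Σ_{i=0}^k ϑ_i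
 + Σ_{i=0}^k (θ_i^{1−γ} η_i ‖z̃^{i+1}‖ + θ_i^{1−γ} η_i ‖x‖ + τL μ_i + θ_i^{1−γ} ν_i))`,
where `F = P + f`, `e(x) := F(x) − F*` and `ϑ_i := θ_{i−1}^{−γ} − (1−θ_i)θ_i^{−γ}` (the term
`θ (i-1)` with truncated subtraction at `i = 0` stands for `θ_{−1} = 1`). -/
theorem vIBPG_telescoped_bound
    {E : Type*} [NormedAddCommGroup E] [InnerProductSpace ℝ E] [FiniteDimensional ℝ E]
    (Q domφ domP domf X : Set E) (φ P f : E → ℝ) (gφ gf : E → E) (L τ γ α : ℝ)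
    (hstand : Standing Q domφ domP domf X φ P f gφ gf L)
    (hrrse : RestrictedRelSmoothExponent domφ domP X φ f gφ gf L τ γ)
    (θ η μ ν : ℕ → ℝ) (hθ : ThetaSeq γ α θ)
    (x y z zt : ℕ → E)
    (hiter : VIBPGIter domφ domP X φ P gφ gf L τ γ θ η μ ν x y z zt)
    (Fstar : ℝ) (hFstar : IsGLB ((fun u => P u + f u) '' (domP ∩ domf ∩ Q)) Fstar) :
    ∀ (k : ℕ), ∀ xx ∈ domP ∩ domφ,
      (P (x (k+1)) + f (x (k+1))) - (P xx + f xx) ≤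
        ((α - 1) / ((k : ℝ) + α - 1)) ^ γ *
          (τ * L * breg φ gφ xx (z 0)
            + (P xx + f xx - Fstar) *
                ∑ i ∈ Finset.range (k+1), (θ (i-1) ^ (-γ) - (1 - θ i) * θ i ^ (-γ))
            + ∑ i ∈ Finset.range (k+1),
                (θ i ^ (1 - γ) * η i * ‖zt (i+1)‖ + θ i ^ (1 - γ) * η i * ‖xx‖
                  + τ * L * μ i + θ i ^ (1 - γ) * ν i)) := by
  obtain ⟨hθ0, hθmem, hαγ, hθbound, hϑ⟩ := hθ
  obtain ⟨hτ, hγ1, hrel⟩ := hrrse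
  have hγ0 : (0:ℝ) ≤ γ := by linarith
  have hτL : (0:ℝ) ≤ τ * L := mul_nonneg hτ.le hstand.hLnn
  have hPconvset : Convex ℝ domP := hstand.hPconv.1
  have hφconvset : Convex ℝ domφ := hstand.hφconv.1
  -- the iterates x k stay in dom P ∩ dom φ
  have hxk : ∀ k, x k ∈ domP ∩ domφ := by
    intro k
    induction k with
    | zero => exact hiter.hx0
    | succ n ih =>
      rw [hiter.hxrec n]
      have hθn := hθmem n
      exact ⟨hPconvset ih.1 (hiter.hzt n).1 (by linarith [hθn.2]) hθn.1.le (by ring),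
        hφconvset ih.2 (hiter.hzt n).2 (by linarith [hθn.2]) hθn.1.le (by ring)⟩
  -- the points y k lie in the interior of dom φ
  have hyk : ∀ k, y k ∈ interior domφ := by
    intro k
    rw [hiter.hy k]
    exact hφconvset.combo_self_interior_mem_interior (hxk k).2 (hiter.hz k).2
      (by linarith [(hθmem k).2]) (hθmem k).1 (by ring)
  have hφQ : domφ ⊆ Q := hstand.hφQ ▸ subset_closure
  have hFlb : ∀ w ∈ domP ∩ domφ, Fstar ≤ P w + f w := fun w hw =>
    hFstar.1 ⟨w, ⟨⟨hw.1, hstand.hfdom hw.2⟩, hφQ hw.2⟩, rfl⟩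
  -- gradient inequality for f at y k
  have hfineq : ∀ k, ∀ u ∈ domφ, f (y k) + ⟪gf (y k), u - y k⟫ ≤ f u := fun k u hu =>
    convexOn_grad_ineq hstand.hfconv (hstand.hfgrad _ (hyk k))
      (hstand.hfdom (interior_subset (hyk k))) (hstand.hfdom hu)
  -- nonnegativity of the Bregman distance of φ
  have hbregnn : ∀ u ∈ domφ, ∀ w ∈ interior domφ, 0 ≤ breg φ gφ u w := by
    intro u hu w hw
    have := convexOn_grad_ineq hstand.hφconv (hstand.hφsmooth.2.1 w hw)
      (interior_subset hw) hu
    simp only [breg]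
    linarith
  -- ϑ_i ≥ 0 for all i
  have hϑnn : ∀ i : ℕ, 0 ≤ θ (i-1) ^ (-γ) - (1 - θ i) * θ i ^ (-γ) := by
    intro i
    rcases Nat.eq_zero_or_pos i with h0 | h1
    · subst h0
      simp only [Nat.zero_sub, hθ0, Real.one_rpow, sub_self, zero_mul]
      norm_num
    · exact hϑ i h1
  -- the one-step inequality
  have key : ∀ k, ∀ xx ∈ domP ∩ domφ,
      θ k ^ (-γ) * ((P (x (k+1)) + f (x (k+1))) - (P xx + f xx))
        + τ * L * breg φ gφ xx (z (k+1)) ≤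
      (1 - θ k) * θ k ^ (-γ) * ((P (x k) + f (x k)) - (P xx + f xx))
        + τ * L * breg φ gφ xx (z k)
        + (θ k ^ (1-γ) * η k * ‖zt (k+1)‖ + θ k ^ (1-γ) * η k * ‖xx‖
            + τ * L * μ k + θ k ^ (1-γ) * ν k) := by
    intro k xx hxx
    obtain ⟨d, hd, hΔ⟩ := hiter.hinex k
    set t := θ k with ht
    have ht0 : 0 < t := (hθmem k).1
    have ht1 : t ≤ 1 := (hθmem k).2
    set c := τ * L * t ^ (γ - 1) with hc
    have htc : t * c = τ * L * t ^ γ := by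
      have h : t ^ (γ - 1) * t = t ^ γ := by
        rw [← Real.rpow_add_one ht0.ne' (γ - 1)]
        norm_num
      calc t * c = τ * L * (t ^ (γ-1) * t) := by rw [hc]; ring
        _ = τ * L * t ^ γ := by rw [h]
    -- relative smoothness bound
    have h1 : breg f gf (x (k+1)) (y k) ≤ τ * L * t ^ γ * breg φ gφ (zt (k+1)) (z k) := by
      rw [hiter.hxrec k, hiter.hy k]
      exact hrel (x k) (hxk k) (zt (k+1)) (hiter.hzt k) (z k)
        ⟨(hiter.hz k).2, (hiter.hz k).1⟩ t ⟨ht0, ht1⟩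
    have hxy : x (k+1) - y k = t • (zt (k+1) - z k) := by
      rw [hiter.hxrec k, hiter.hy k]; module
    have hb : breg f gf (x (k+1)) (y k)
        = f (x (k+1)) - f (y k) - t * ⟪gf (y k), zt (k+1) - z k⟫ := by
      simp only [breg]
      rw [hxy, real_inner_smul_right]
    -- P convexity
    have h4 : P (x (k+1)) ≤ (1 - t) * P (x k) + t * P (zt (k+1)) := by
      rw [hiter.hxrec k]
      exact hstand.hPconv.2 (hxk k).1 (hiter.hzt k).1 (by linarith) ht0.le (by ring)
    -- multiplied gradient inequalities
    have h2' := mul_le_mul_of_nonneg_left (hfineq k xx hxx.2) ht0.le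
    have h3' := mul_le_mul_of_nonneg_left (hfineq k (x k) (hxk k).2)
      (by linarith : (0:ℝ) ≤ 1 - t)
    have h5' := mul_le_mul_of_nonneg_left (hd xx hxx.1) ht0.le
    -- the error bound from the inexact optimality condition
    have h6 : ⟪d + gf (y k) + c • (gφ (z (k+1)) - gφ (z k)), zt (k+1) - xx⟫
        ≤ η k * (‖zt (k+1)‖ + ‖xx‖) :=
      le_trans (real_inner_le_norm _ _)
        (mul_le_mul hΔ (norm_sub_le _ _) (norm_nonneg _) (hiter.hη k))
    have h6' := mul_le_mul_of_nonneg_left h6 ht0.le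
    -- linear algebraic identities
    have hlin : t * ⟪gf (y k), zt (k+1) - z k⟫ - (1-t) * ⟪gf (y k), x k - y k⟫
        - t * ⟪gf (y k), xx - y k⟫ = t * ⟪gf (y k), zt (k+1) - xx⟫ := by
      rw [hiter.hy k]
      simp only [inner_sub_right, inner_add_right, real_inner_smul_right]
      ring
    have hΔeq : ⟪d + gf (y k) + c • (gφ (z (k+1)) - gφ (z k)), zt (k+1) - xx⟫
        = -⟪d, xx - zt (k+1)⟫ + ⟪gf (y k), zt (k+1) - xx⟫
          - c * ⟪gφ (z (k+1)) - gφ (z k), xx - zt (k+1)⟫ := by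
      simp only [inner_add_left, inner_sub_left, inner_sub_right, real_inner_smul_left]
      ring
    have hΔeq' := congrArg (fun r => t * r) hΔeq
    have htcC : t * c * ⟪gφ (z (k+1)) - gφ (z k), xx - zt (k+1)⟫
        = τ * L * t ^ γ * ⟪gφ (z (k+1)) - gφ (z k), xx - zt (k+1)⟫ := by rw [htc]
    -- three-point identity
    have h7 : ⟪gφ (z (k+1)) - gφ (z k), xx - zt (k+1)⟫ =
        breg φ gφ xx (z k) - breg φ gφ xx (z (k+1))
          + breg φ gφ (zt (k+1)) (z (k+1)) - breg φ gφ (zt (k+1)) (z k) := by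
      simp only [breg, inner_sub_left, inner_sub_right]
      ring
    have hKC : τ * L * t ^ γ * ⟪gφ (z (k+1)) - gφ (z k), xx - zt (k+1)⟫
        = τ * L * t ^ γ * breg φ gφ xx (z k) - τ * L * t ^ γ * breg φ gφ xx (z (k+1))
          + τ * L * t ^ γ * breg φ gφ (zt (k+1)) (z (k+1))
          - τ * L * t ^ γ * breg φ gφ (zt (k+1)) (z k) := by
      rw [h7]; ring
    have hK : (0:ℝ) ≤ τ * L * t ^ γ := mul_nonneg hτL (Real.rpow_nonneg ht0.le γ)
    have h8' : τ * L * t ^ γ * breg φ gφ (zt (k+1)) (z (k+1)) ≤ τ * L * t ^ γ * μ k :=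
      mul_le_mul_of_nonneg_left (hiter.hdist k) hK
    -- the unscaled one-step inequality
    have hmain : (P (x (k+1)) + f (x (k+1))) - (P xx + f xx) ≤
        (1 - t) * ((P (x k) + f (x k)) - (P xx + f xx))
        + τ * L * t ^ γ * breg φ gφ xx (z k) - τ * L * t ^ γ * breg φ gφ xx (z (k+1))
        + τ * L * t ^ γ * μ k + t * η k * (‖zt (k+1)‖ + ‖xx‖) + t * ν k := by
      linarith [h1, hb, h4, h2', h3', h5', h6', hlin, hΔeq', htcC, hKC, h8']
    -- scale by t ^ (-γ)
    have hm : (0:ℝ) < t ^ (-γ) := Real.rpow_pos_of_pos ht0 (-γ)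
    have S := mul_le_mul_of_nonneg_left hmain hm.le
    have hinv : t ^ (-γ) * t ^ γ = 1 := by
      rw [← Real.rpow_add ht0]; norm_num
    have hmK : t ^ (-γ) * (τ * L * t ^ γ) = τ * L := by
      calc t ^ (-γ) * (τ * L * t ^ γ) = τ * L * (t ^ (-γ) * t ^ γ) := by ring
        _ = τ * L := by rw [hinv, mul_one]
    have e2 : t ^ (-γ) * t = t ^ (1-γ) := by
      rw [show (1-γ : ℝ) = -γ + 1 by ring, Real.rpow_add ht0, Real.rpow_one]
    have q1 : t ^ (-γ) * (τ * L * t ^ γ * breg φ gφ xx (z k)) = τ * L * breg φ gφ xx (z k) := by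
      calc t ^ (-γ) * (τ * L * t ^ γ * breg φ gφ xx (z k))
          = (t ^ (-γ) * (τ * L * t ^ γ)) * breg φ gφ xx (z k) := by ring
        _ = _ := by rw [hmK]
    have q2 : t ^ (-γ) * (τ * L * t ^ γ * breg φ gφ xx (z (k+1)))
        = τ * L * breg φ gφ xx (z (k+1)) := by
      calc t ^ (-γ) * (τ * L * t ^ γ * breg φ gφ xx (z (k+1)))
          = (t ^ (-γ) * (τ * L * t ^ γ)) * breg φ gφ xx (z (k+1)) := by ring
        _ = _ := by rw [hmK]
    have q3 : t ^ (-γ) * (τ * L * t ^ γ * μ k) = τ * L * μ k := by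
      calc t ^ (-γ) * (τ * L * t ^ γ * μ k) = (t ^ (-γ) * (τ * L * t ^ γ)) * μ k := by ring
        _ = _ := by rw [hmK]
    have q4 : t ^ (-γ) * (t * η k * ‖zt (k+1)‖) = t ^ (1-γ) * η k * ‖zt (k+1)‖ := by
      calc t ^ (-γ) * (t * η k * ‖zt (k+1)‖) = (t ^ (-γ) * t) * (η k * ‖zt (k+1)‖) := by ring
        _ = _ := by rw [e2]; ring
    have q5 : t ^ (-γ) * (t * η k * ‖xx‖) = t ^ (1-γ) * η k * ‖xx‖ := by
      calc t ^ (-γ) * (t * η k * ‖xx‖) = (t ^ (-γ) * t) * (η k * ‖xx‖) := by ring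
        _ = _ := by rw [e2]; ring
    have q6 : t ^ (-γ) * (t * ν k) = t ^ (1-γ) * ν k := by
      calc t ^ (-γ) * (t * ν k) = (t ^ (-γ) * t) * ν k := by ring
        _ = _ := by rw [e2]
    linarith [S, q1, q2, q3, q4, q5, q6]
  -- the telescoped inequality
  have star : ∀ k, ∀ xx ∈ domP ∩ domφ,
      θ k ^ (-γ) * ((P (x (k+1)) + f (x (k+1))) - (P xx + f xx))
        + τ * L * breg φ gφ xx (z (k+1)) ≤
      τ * L * breg φ gφ xx (z 0)
        + (P xx + f xx - Fstar) *
            ∑ i ∈ Finset.range (k+1), (θ (i-1) ^ (-γ) - (1 - θ i) * θ i ^ (-γ))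
        + ∑ i ∈ Finset.range (k+1),
            (θ i ^ (1 - γ) * η i * ‖zt (i+1)‖ + θ i ^ (1 - γ) * η i * ‖xx‖
              + τ * L * μ i + θ i ^ (1 - γ) * ν i) := by
    intro k xx hxx
    have hex : (0:ℝ) ≤ P xx + f xx - Fstar := by linarith [hFlb xx hxx]
    induction k with
    | zero =>
      have hk := key 0 xx hxx
      simp only [zero_add, Finset.sum_range_one, Nat.zero_sub, hθ0, Real.one_rpow] at hk ⊢
      linarith
    | succ n ih =>
      have hk := key (n+1) xx hxx
      have hϑn := hϑ (n+1) (Nat.le_add_left 1 n)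
      simp only [Nat.add_sub_cancel] at hϑn
      have hFn1 : Fstar ≤ P (x (n+1)) + f (x (n+1)) := hFlb _ (hxk (n+1))
      have hprod : (θ n ^ (-γ) - (1 - θ (n+1)) * θ (n+1) ^ (-γ)) *
            ((P xx + f xx) - (P (x (n+1)) + f (x (n+1))))
          ≤ (θ n ^ (-γ) - (1 - θ (n+1)) * θ (n+1) ^ (-γ)) * (P xx + f xx - Fstar) :=
        mul_le_mul_of_nonneg_left (by linarith) hϑn
      simp only [Finset.sum_range_succ, Nat.add_sub_cancel] at ih ⊢
      linarith [hk, ih, hprod]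
  -- conclusion
  intro k xx hxx
  have hstar := star k xx hxx
  have hDnn : 0 ≤ breg φ gφ xx (z (k+1)) := hbregnn xx hxx.2 (z (k+1)) (hiter.hz (k+1)).2
  have hD0nn : 0 ≤ breg φ gφ xx (z 0) := hbregnn xx hxx.2 (z 0) (hiter.hz 0).2
  have hex : (0:ℝ) ≤ P xx + f xx - Fstar := by linarith [hFlb xx hxx]
  have hα1 : (0:ℝ) < α - 1 := by linarith
  have hden : (0:ℝ) < (k : ℝ) + α - 1 := by
    have : (0:ℝ) ≤ (k : ℝ) := Nat.cast_nonneg k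
    linarith
  have hθB : θ k ≤ (α - 1) / ((k : ℝ) + α - 1) := by
    rcases Nat.eq_zero_or_pos k with hk0 | hk1
    · subst hk0
      rw [hθ0]
      push_cast
      rw [zero_add]
      exact le_of_eq (div_self hα1.ne').symm
    · exact hθbound k hk1
  have hrp : θ k ^ γ ≤ ((α - 1) / ((k : ℝ) + α - 1)) ^ γ :=
    Real.rpow_le_rpow (hθmem k).1.le hθB hγ0
  have hRnn : (0:ℝ) ≤ τ * L * breg φ gφ xx (z 0)
      + (P xx + f xx - Fstar) *
          ∑ i ∈ Finset.range (k+1), (θ (i-1) ^ (-γ) - (1 - θ i) * θ i ^ (-γ))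
      + ∑ i ∈ Finset.range (k+1),
          (θ i ^ (1 - γ) * η i * ‖zt (i+1)‖ + θ i ^ (1 - γ) * η i * ‖xx‖
            + τ * L * μ i + θ i ^ (1 - γ) * ν i) := by
    have hs1 : (0:ℝ) ≤ ∑ i ∈ Finset.range (k+1), (θ (i-1) ^ (-γ) - (1 - θ i) * θ i ^ (-γ)) :=
      Finset.sum_nonneg fun i _ => hϑnn i
    have hs2 : (0:ℝ) ≤ ∑ i ∈ Finset.range (k+1),
        (θ i ^ (1 - γ) * η i * ‖zt (i+1)‖ + θ i ^ (1 - γ) * η i * ‖xx‖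
          + τ * L * μ i + θ i ^ (1 - γ) * ν i) := by
      refine Finset.sum_nonneg fun i _ => ?_
      have hp : (0:ℝ) ≤ θ i ^ (1 - γ) := Real.rpow_nonneg (hθmem i).1.le _
      have := hiter.hη i
      have := hiter.hμ i
      have := hiter.hν i
      have := norm_nonneg (zt (i+1))
      have := norm_nonneg xx
      positivity
    have := mul_nonneg hτL hD0nn
    have := mul_nonneg hex hs1
    linarith
  have hdrop : θ k ^ (-γ) * ((P (x (k+1)) + f (x (k+1))) - (P xx + f xx)) ≤
      τ * L * breg φ gφ xx (z 0)
      + (P xx + f xx - Fstar) *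
          ∑ i ∈ Finset.range (k+1), (θ (i-1) ^ (-γ) - (1 - θ i) * θ i ^ (-γ))
      + ∑ i ∈ Finset.range (k+1),
          (θ i ^ (1 - γ) * η i * ‖zt (i+1)‖ + θ i ^ (1 - γ) * η i * ‖xx‖
            + τ * L * μ i + θ i ^ (1 - γ) * ν i) := by
    have := mul_nonneg hτL hDnn
    linarith
  have hone : θ k ^ γ * θ k ^ (-γ) = 1 := by
    rw [← Real.rpow_add (hθmem k).1]; norm_num
  have hE : θ k ^ γ * (θ k ^ (-γ) * ((P (x (k+1)) + f (x (k+1))) - (P xx + f xx)))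
      = (P (x (k+1)) + f (x (k+1))) - (P xx + f xx) := by
    rw [← mul_assoc, hone, one_mul]
  calc (P (x (k+1)) + f (x (k+1))) - (P xx + f xx)
      = θ k ^ γ * (θ k ^ (-γ) * ((P (x (k+1)) + f (x (k+1))) - (P xx + f xx))) := hE.symm
    _ ≤ θ k ^ γ * (τ * L * breg φ gφ xx (z 0)
          + (P xx + f xx - Fstar) *
              ∑ i ∈ Finset.range (k+1), (θ (i-1) ^ (-γ) - (1 - θ i) * θ i ^ (-γ))
          + ∑ i ∈ Finset.range (k+1),
              (θ i ^ (1 - γ) * η i * ‖zt (i+1)‖ + θ i ^ (1 - γ) * η i * ‖xx‖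
                + τ * L * μ i + θ i ^ (1 - γ) * ν i)) :=
        mul_le_mul_of_nonneg_left hdrop (Real.rpow_nonneg (hθmem k).1.le γ)
    _ ≤ _ := mul_le_mul_of_nonneg_right hrp hRnn
end

section
/- Function value convergence of v-iBPG: under the standing assumptions and the restricted relative smoothness exponent assumption, if k^{−γ}·Σ_{i=0}^{k-1} θ_i^{1−γ}·η_i·(‖z̃^{i+1}‖+1) → 0, k^{−γ}·Σ_{i=0}^{k-1} μ_i → 0 and k^{−γ}·Σ_{i=0}^{k-1} θ_i^{1−γ}·ν_i → 0, then F(x^k) → F* as k → ∞. -/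
open Filter Topology RealInnerProductSpace

section Aux
variable {E : Type*} [NormedAddCommGroup E] [InnerProductSpace ℝ E] [CompleteSpace E]

lemma convex_grad_ineq_s16 {S : Set E} {g : E → ℝ} (hg : ConvexOn ℝ S g) {a b G : E}
    (ha : a ∈ S) (hb : b ∈ S) (hG : HasGradientAt g G b) :
    g b + ⟪G, a - b⟫ ≤ g a := by
  have hc : HasDerivAt (fun t : ℝ => b + t • (a - b)) (a - b) 0 := by
    simpa using ((hasDerivAt_id (0:ℝ)).smul_const (a - b)).const_add b
  have hcomp : HasDerivAt (fun t : ℝ => g (b + t • (a - b))) ⟪G, a - b⟫ 0 := by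
    have hb0 : HasFDerivAt g ((InnerProductSpace.toDual ℝ E) G) (b + (0:ℝ) • (a - b)) := by
      simpa using hG.hasFDerivAt
    have := hb0.comp_hasDerivAt 0 hc
    simpa [Function.comp_def] using this
  have hslope := hasDerivAt_iff_tendsto_slope.1 hcomp
  have hslope' : Tendsto (slope (fun t : ℝ => g (b + t • (a - b))) 0) (𝓝[>] 0)
      (𝓝 ⟪G, a - b⟫) := hslope.mono_left (nhdsWithin_mono _ (by intro t ht; exact ne_of_gt ht))
  have hbound : ∀ᶠ t in 𝓝[>] (0:ℝ), slope (fun t : ℝ => g (b + t • (a - b))) 0 t ≤ g a - g b := by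
    filter_upwards [Ioc_mem_nhdsGT_of_mem (by norm_num : (0:ℝ) ∈ Set.Ico (0:ℝ) 1)] with t ht
    have ht0 : 0 < t := ht.1
    have ht1 : t ≤ 1 := ht.2
    have hmem : b + t • (a - b) = (1 - t) • b + t • a := by module
    have hcvx := hg.2 hb ha (by linarith : (0:ℝ) ≤ 1 - t) ht0.le (by ring)
    rw [slope_def_field]
    have : g (b + t • (a - b)) ≤ (1 - t) * g b + t * g a := by rw [hmem]; exact hcvx
    have h0 : b + (0:ℝ) • (a - b) = b := by simp
    rw [h0, sub_zero, div_le_iff₀ ht0]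
    nlinarith
  have := le_of_tendsto hslope' hbound
  linarith

lemma breg_nonneg {S : Set E} {φ : E → ℝ} {gφ : E → E} (hφ : ConvexOn ℝ S φ)
    {a b : E} (ha : a ∈ S) (hb : b ∈ S) (hG : HasGradientAt φ (gφ b) b) :
    0 ≤ breg φ gφ a b := by
  have := convex_grad_ineq_s16 hφ ha hb hG
  simp only [breg]; linarith

omit [CompleteSpace E] in
lemma breg_four (φ : E → ℝ) (gφ : E → E) (u zt z zp : E) :
    breg φ gφ zt z - ⟪gφ zp - gφ z, zt - u⟫ =
      breg φ gφ u z - breg φ gφ u zp + breg φ gφ zt zp := by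
  simp only [breg, inner_sub_left, inner_sub_right]; ring

lemma step_ineq
    {domφ domP domf X : Set E} {φ P f : E → ℝ} {gφ gf : E → E} {L τ γ : ℝ}
    (hfconv : ConvexOn ℝ domf f) (hPconv : ConvexOn ℝ domP P)
    (hφdomf : domφ ⊆ domf)
    (hrrse : RestrictedRelSmoothExponent domφ domP X φ f gφ gf L τ γ)
    (hLτ : 0 ≤ τ * L)
    {θ ν η μk : ℝ} (hθ : θ ∈ Set.Ioc (0:ℝ) 1) (hη : 0 ≤ η)
    {x zt u z zp : E}
    (hx : x ∈ domP ∩ domφ) (hzt : zt ∈ domP ∩ domφ) (hu : u ∈ domP ∩ domφ)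
    (hz : z ∈ X ∩ interior domφ) (hzp : zp ∈ X ∩ interior domφ)
    (hgrad : HasGradientAt f (gf ((1-θ)•x + θ•z)) ((1-θ)•x + θ•z))
    {d : E} (hd : d ∈ nuSubdiff P domP ν zt)
    (hΔ : ‖d + gf ((1-θ)•x + θ•z) + (τ*L*θ^(γ-1)) • (gφ zp - gφ z)‖ ≤ η)
    (hμ : breg φ gφ zt zp ≤ μk) :
    P ((1-θ)•x + θ•zt) + f ((1-θ)•x + θ•zt) ≤ (1-θ)*(P x + f x) + θ*(P u + f u)
      + τ*L*θ^γ*(breg φ gφ u z - breg φ gφ u zp) + θ*ν + θ*η*(‖u‖+‖zt‖)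
      + τ*L*θ^γ*μk := by
  obtain ⟨hθ0, hθ1⟩ := hθ
  set y : E := (1-θ)•x + θ•z with hy_def
  set xp : E := (1-θ)•x + θ•zt with hxp_def
  set w : E := (1-θ)•x + θ•u with hw_def
  set gy : E := gf y with hgy_def
  set c : ℝ := τ*L*θ^(γ-1) with hc_def
  set s : ℝ := τ*L*θ^γ with hs_def
  set Δ : E := d + gy + c • (gφ zp - gφ z) with hΔ_def
  have hsnn : 0 ≤ s := mul_nonneg hLτ (Real.rpow_nonneg hθ0.le γ)
  have hθc : θ * c = s := by
    rw [hc_def, hs_def, Real.rpow_sub hθ0, Real.rpow_one]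
    field_simp
  have hxf : x ∈ domf := hφdomf hx.2
  have huf : u ∈ domf := hφdomf hu.2
  have hzf : z ∈ domf := hφdomf (interior_subset hz.2)
  have hyf : y ∈ domf := hfconv.1 hxf hzf (by linarith) hθ0.le (by ring)
  have hwf : w ∈ domf := hfconv.1 hxf huf (by linarith) hθ0.le (by ring)
  have hF1 : P xp ≤ (1-θ)*P x + θ*P zt := hPconv.2 hx.1 hzt.1 (by linarith) hθ0.le (by ring)
  have hF2 : f xp ≤ f y + θ*⟪gy, zt - z⟫ + s * breg φ gφ zt z := by
    have h2 := hrrse.2.2 x hx zt hzt z ⟨hz.2, hz.1⟩ θ ⟨hθ0, hθ1⟩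
    have he : breg f gf xp y = f xp - f y - ⟪gy, xp - y⟫ := rfl
    have hxy : xp - y = θ•(zt - z) := by rw [hxp_def, hy_def]; module
    have hi1 : ⟪gy, xp - y⟫ = θ * ⟪gy, zt - z⟫ := by rw [hxy, real_inner_smul_right]
    rw [he, hi1] at h2
    rw [hs_def]
    linarith
  have hF3 : θ*(P zt + ⟪d, u - zt⟫ - ν) ≤ θ*P u :=
    mul_le_mul_of_nonneg_left (hd u hu.1) hθ0.le
  have hF4 : θ*⟪d, u - zt⟫ = θ*⟪Δ, u - zt⟫ - θ*⟪gy, u - zt⟫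
      + s * ⟪gφ zp - gφ z, zt - u⟫ := by
    have hdd : d = Δ - gy - c • (gφ zp - gφ z) := by rw [hΔ_def]; module
    have hneg : ⟪gφ zp - gφ z, u - zt⟫ = -⟪gφ zp - gφ z, zt - u⟫ := by
      rw [show u - zt = -(zt - u) by module, inner_neg_right]
    rw [hdd, inner_sub_left, inner_sub_left, real_inner_smul_left, hneg, ← hθc]
    ring
  have hF5 : f y + θ*⟪gy, u - zt⟫ + θ*⟪gy, zt - z⟫ ≤ f w := by
    have hcg := convex_grad_ineq_s16 hfconv hwf hyf hgrad
    have hwy : w - y = θ•(u - z) := by rw [hw_def, hy_def]; module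
    have : ⟪gy, w - y⟫ = θ*⟪gy, u - zt⟫ + θ*⟪gy, zt - z⟫ := by
      rw [hwy, real_inner_smul_right,
        show u - z = (u - zt) + (zt - z) by module, inner_add_right]
      ring
    linarith
  have hF6 : f w ≤ (1-θ)*f x + θ*f u := hfconv.2 hxf huf (by linarith) hθ0.le (by ring)
  have hF7 : -(θ*⟪Δ, u - zt⟫) ≤ θ*(η*(‖u‖+‖zt‖)) := by
    have h1 : -⟪Δ, u - zt⟫ ≤ ‖Δ‖*‖u - zt‖ := by
      have := abs_real_inner_le_norm Δ (u - zt)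
      have := neg_abs_le ⟪Δ, u - zt⟫
      linarith
    have h2 : ‖Δ‖*‖u - zt‖ ≤ η*(‖u‖+‖zt‖) :=
      mul_le_mul hΔ (norm_sub_le u zt) (norm_nonneg _) hη
    have := mul_le_mul_of_nonneg_left (h1.trans h2) hθ0.le
    linarith
  have hF8 : s*(breg φ gφ zt z - ⟪gφ zp - gφ z, zt - u⟫)
      = s*(breg φ gφ u z - breg φ gφ u zp + breg φ gφ zt zp) := by
    rw [breg_four]
  have hF9 : s * breg φ gφ zt zp ≤ s * μk := mul_le_mul_of_nonneg_left hμ hsnn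
  nlinarith [hF1, hF2, hF3, hF4, hF5, hF6, hF7, hF8, hF9]

end Aux

lemma theta_lower {γ α : ℝ} {θ : ℕ → ℝ} (hθ : ThetaSeq γ α θ) (hγ : 1 ≤ γ) :
    ∀ j : ℕ, θ 1 / ((j:ℝ)+1) ≤ θ j := by
  obtain ⟨h0, hIoc, hα, hup, hϑ⟩ := hθ
  have hc0 : 0 < θ 1 := (hIoc 1).1
  have hc1 : θ 1 ≤ 1 := (hIoc 1).2
  intro j
  induction j with
  | zero => simp [h0]; linarith
  | succ j ih =>
    by_contra hlt
    push_neg at hlt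
    push_cast at hlt ⊢
    set J : ℝ := (j:ℝ) with hJ
    have hJ0 : (0:ℝ) < J+1 := by positivity
    have hJ1 : (0:ℝ) < J+1+1 := by positivity
    set q : ℝ := θ (j+1) with hqdef
    have hq0 : 0 < q := (hIoc (j+1)).1
    have hq1 : q ≤ 1 := (hIoc (j+1)).2
    have hp0 : 0 < θ j := (hIoc j).1
    have hv := hϑ (j+1) (by omega)
    simp only [Nat.add_sub_cancel] at hv
    have hpγ : 0 < (θ j)^γ := Real.rpow_pos_of_pos hp0 γ
    have hqγ : 0 < q^γ := Real.rpow_pos_of_pos hq0 γ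
    rw [Real.rpow_neg hp0.le, Real.rpow_neg hq0.le] at hv
    have hkey : (1 - q) * (θ j)^γ ≤ q^γ := by
      have h1 : (1 - q) * (q^γ)⁻¹ ≤ ((θ j)^γ)⁻¹ := by linarith
      have h2 := mul_le_mul_of_nonneg_right h1 (le_of_lt (mul_pos hqγ hpγ))
      have e1 : (1-q)*(q^γ)⁻¹*(q^γ*(θ j)^γ) = (1-q)*(θ j)^γ := by field_simp
      have e2 : ((θ j)^γ)⁻¹*(q^γ*(θ j)^γ) = q^γ := by field_simp
      linarith
    have hpb : (θ 1 / (J+1))^γ ≤ (θ j)^γ :=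
      Real.rpow_le_rpow (by positivity) ih (by linarith)
    have hfrac : ((J+1)/(J+1+1)) ≤ 1 := by rw [div_le_one hJ1]; linarith
    have hfrac0 : (0:ℝ) < (J+1)/(J+1+1) := by positivity
    have hA : ((J+1)/(J+1+1))^γ ≤ (J+1)/(J+1+1) := by
      have := Real.rpow_le_rpow_of_exponent_ge hfrac0 hfrac hγ
      rwa [Real.rpow_one] at this
    have h1q : (J+1)/(J+1+1) ≤ 1 - q := by
      have h2 : θ 1 / (J+1+1) ≤ 1 / (J+1+1) := by gcongr
      have h3 : q < 1/(J+1+1) := lt_of_lt_of_le hlt h2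
      rw [div_le_iff₀ hJ1]
      rw [lt_div_iff₀ hJ1] at h3
      nlinarith
    have c2 : ((J+1)/(J+1+1)) * (θ 1/(J+1))^γ ≤ (1 - q) * (θ j)^γ :=
      mul_le_mul h1q hpb (Real.rpow_nonneg (by positivity) γ) (by linarith)
    have c3 : (θ 1/(J+1+1))^γ ≤ ((J+1)/(J+1+1)) * (θ 1/(J+1))^γ := by
      have eid : θ 1/(J+1+1) = ((J+1)/(J+1+1)) * (θ 1/(J+1)) := by
        field_simp
      rw [eid, Real.mul_rpow hfrac0.le (by positivity)]
      exact mul_le_mul_of_nonneg_right hA (Real.rpow_nonneg (by positivity) γ)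
    have c4 : q^γ < (θ 1/(J+1+1))^γ := Real.rpow_lt_rpow hq0.le hlt (by linarith)
    linarith

lemma theta_kupper {γ α : ℝ} {θ : ℕ → ℝ} (hθ : ThetaSeq γ α θ) (hγ : 1 ≤ γ) :
    ∀ K : ℕ, 1 ≤ K → θ (K-1) ≤ (α-1)/(K:ℝ) := by
  obtain ⟨h0, hIoc, hα, hup, hϑ⟩ := hθ
  intro K hK
  have hα2 : 2 ≤ α := by linarith
  rcases Nat.lt_or_ge K 2 with h2 | h2
  · interval_cases K
    · simp [h0]; linarith
  · have hK1 : 1 ≤ K - 1 := by omega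
    have h := hup (K-1) hK1
    have hcast : ((K-1:ℕ):ℝ) = (K:ℝ) - 1 := by
      have : (1:ℕ) ≤ K := hK
      push_cast [Nat.cast_sub this]
      ring
    rw [hcast] at h
    have hKpos : (0:ℝ) < (K:ℝ) := by
      have : 0 < K := by omega
      exact_mod_cast this
    calc θ (K-1) ≤ (α-1)/((K:ℝ) - 1 + α - 1) := h
      _ ≤ (α-1)/(K:ℝ) := by
          apply div_le_div_of_nonneg_left (by linarith) hKpos (by linarith)

lemma abstract_step {θ γ τL Fk Fk1 Fu D0 D1 νk ηu μk tb δ : ℝ}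
    (hθ0 : 0 < θ) (hτL : 0 ≤ τL)
    (hps : Fk1 ≤ (1-θ)*Fk + θ*Fu + τL*θ^γ*(D0 - D1) + θ*νk + θ*ηu + τL*θ^γ*μk)
    (hvth : 0 ≤ tb - (1-θ)*θ^(-γ))
    (ha : -(Fk - Fu) ≤ δ) :
    θ^(-γ)*(Fk1 - Fu) + τL*D1 ≤ tb*(Fk - Fu) + τL*D0 + (tb - (1-θ)*θ^(-γ))*δ
      + (θ^(1-γ)*νk + θ^(1-γ)*ηu + τL*μk) := by
  have htpos : 0 < θ^(-γ) := Real.rpow_pos_of_pos hθ0 (-γ)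
  set t := θ^(-γ) with htdef
  have h1 : t*θ^γ = 1 := by
    rw [htdef, ← Real.rpow_add hθ0]
    simp
  have h2 : t*θ = θ^(1-γ) := by
    rw [htdef, show (1:ℝ)-γ = -γ + 1 by ring, Real.rpow_add hθ0, Real.rpow_one]
  have hmul := mul_le_mul_of_nonneg_left hps htpos.le
  have e1 : t*(τL*θ^γ*(D0-D1)) = τL*(D0-D1) := by
    calc t*(τL*θ^γ*(D0-D1)) = (t*θ^γ)*(τL*(D0-D1)) := by ring
    _ = τL*(D0-D1) := by rw [h1]; ring
  have e2 : t*(τL*θ^γ*μk) = τL*μk := by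
    calc t*(τL*θ^γ*μk) = (t*θ^γ)*(τL*μk) := by ring
    _ = τL*μk := by rw [h1]; ring
  have e3 : t*(θ*νk) = θ^(1-γ)*νk := by
    calc t*(θ*νk) = (t*θ)*νk := by ring
    _ = θ^(1-γ)*νk := by rw [h2]
  have e4 : t*(θ*ηu) = θ^(1-γ)*ηu := by
    calc t*(θ*ηu) = (t*θ)*ηu := by ring
    _ = θ^(1-γ)*ηu := by rw [h2]
  have hkey : 0 ≤ (tb - (1-θ)*t)*((Fk - Fu) + δ) :=
    mul_nonneg hvth (by linarith)
  nlinarith [hmul, e1, e2, e3, e4, hkey]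


set_option maxHeartbeats 1000000 in
lemma master_bound
    {E : Type*} [NormedAddCommGroup E] [InnerProductSpace ℝ E] [FiniteDimensional ℝ E]
    (Q domφ domP domf X : Set E) (φ P f : E → ℝ) (gφ gf : E → E) (L τ γ α : ℝ)
    (hstand : Standing Q domφ domP domf X φ P f gφ gf L)
    (hrrse : RestrictedRelSmoothExponent domφ domP X φ f gφ gf L τ γ)
    (θ η μ ν : ℕ → ℝ) (hθ : ThetaSeq γ α θ)
    (x y z zt : ℕ → E)
    (hiter : VIBPGIter domφ domP X φ P gφ gf L τ γ θ η μ ν x y z zt)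
    (Fstar : ℝ)
    (hlb : ∀ v, v ∈ domP ∩ domφ → Fstar ≤ P v + f v)
    (u : E) (hu : u ∈ domP ∩ domφ)
    (K : ℕ) (hK : 1 ≤ K) :
    P (x K) + f (x K) - Fstar ≤
      (P u + f u - Fstar) * ((α-1)^γ + (α-1)^γ * (θ 1)^((1:ℝ)-γ) + 1)
      + (α-1)^γ * ((K:ℝ)^(-γ)) *
          |P (x 0) + f (x 0) - (P u + f u) + τ*L*breg φ gφ u (z 0)|
      + (α-1)^γ * (((K:ℝ)^(-γ)) * ∑ i ∈ Finset.range K, (θ i)^((1:ℝ)-γ)*ν i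
          + (max 1 ‖u‖) * (((K:ℝ)^(-γ)) *
              ∑ i ∈ Finset.range K, (θ i)^((1:ℝ)-γ)*η i*(‖zt (i+1)‖+1))
          + τ*L * (((K:ℝ)^(-γ)) * ∑ i ∈ Finset.range K, μ i)) := by
  have hγ1 : 1 ≤ γ := hrrse.2.1
  have hγ0 : (0:ℝ) < γ := by linarith
  have hLτ : 0 ≤ τ*L := mul_nonneg hrrse.1.le hstand.hLnn
  have hθ0eq : θ 0 = 1 := hθ.1
  have hIoc := hθ.2.1
  have hαγ : γ + 1 ≤ α := hθ.2.2.1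
  have hϑ := hθ.2.2.2.2
  have hθpos : ∀ k, 0 < θ k := fun k => (hIoc k).1
  have hθle1 : ∀ k, θ k ≤ 1 := fun k => (hIoc k).2
  have hdomφconv : Convex ℝ domφ := hstand.hφconv.1
  have hdomPconv : Convex ℝ domP := hstand.hPconv.1
  -- x k stays in domP ∩ domφ
  have hxmem : ∀ k, x k ∈ domP ∩ domφ := by
    intro k
    induction k with
    | zero => exact hiter.hx0
    | succ k ih =>
      rw [hiter.hxrec k]
      exact ⟨hdomPconv ih.1 (hiter.hzt k).1 (by linarith [hθle1 k]) (hθpos k).le (by ring),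
        hdomφconv ih.2 (hiter.hzt k).2 (by linarith [hθle1 k]) (hθpos k).le (by ring)⟩
  -- y k in interior domφ
  have hymem : ∀ k, (1 - θ k) • x k + θ k • z k ∈ interior domφ := by
    intro k
    exact hdomφconv.combo_closure_interior_mem_interior (a := 1 - θ k) (b := θ k)
      (subset_closure (hxmem k).2) (hiter.hz k).2
      (by linarith [hθle1 k]) (hθpos k) (by ring)
  set δ : ℝ := P u + f u - Fstar with hδdef
  clear_value δ
  have hδ0 : 0 ≤ δ := by have := hlb u hu; simp only [hδdef]; linarith
  set M : ℝ := max 1 ‖u‖ with hMdef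
  clear_value M
  have hM1 : 1 ≤ M := by rw [hMdef]; exact le_max_left _ _
  have hMu : ‖u‖ ≤ M := by rw [hMdef]; exact le_max_right _ _
  set vth : ℕ → ℝ := fun j => (θ (j-1))^(-γ) - (1-θ j)*(θ j)^(-γ) with hvth
  clear_value vth
  set ee : ℕ → ℝ := fun j => (θ j)^((1:ℝ)-γ)*ν j + (θ j)^((1:ℝ)-γ)*(η j*(‖u‖+‖zt (j+1)‖))
    + τ*L*μ j with hee
  clear_value ee
  set A : ℕ → ℝ := fun k => (θ (k-1))^(-γ)*(P (x k) + f (x k) - (P u + f u))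
    + τ*L*breg φ gφ u (z k) with hAdef
  clear_value A
  have hvth0 : ∀ j, 0 ≤ vth j := by
    intro j
    match j with
    | 0 => simp [hvth, hθ0eq]
    | (j+1) =>
      simp only [hvth]
      exact hϑ (j+1) (by omega)
  -- one-step recursion
  have hstep : ∀ k, A (k+1) ≤ A k + vth k * δ + ee k := by
    intro k
    obtain ⟨d, hd, hΔ⟩ := hiter.hinex k
    rw [hiter.hy k] at hΔ
    have hgrad := hstand.hfgrad _ (hymem k)
    have hps := step_ineq hstand.hfconv hstand.hPconv hstand.hfdom hrrse hLτ (hIoc k)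
      (hiter.hη k) (hxmem k) (hiter.hzt k) hu (hiter.hz k) (hiter.hz (k+1)) hgrad hd hΔ
      (hiter.hdist k)
    rw [← hiter.hxrec k] at hps
    have ha : -(P (x k) + f (x k) - (P u + f u)) ≤ δ := by
      have := hlb (x k) (hxmem k); simp only [hδdef]; linarith
    have habs := abstract_step (θ := θ k) (γ := γ) (τL := τ*L)
      (Fk := P (x k) + f (x k)) (Fk1 := P (x (k+1)) + f (x (k+1))) (Fu := P u + f u)
      (D0 := breg φ gφ u (z k)) (D1 := breg φ gφ u (z (k+1)))
      (νk := ν k) (ηu := η k*(‖u‖+‖zt (k+1)‖)) (μk := μ k)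
      (tb := (θ (k-1))^(-γ)) (δ := δ) (hθpos k) hLτ (by linarith [hps])
      (by simpa [hvth] using hvth0 k) ha
    simp only [hAdef, hvth, hee, Nat.add_sub_cancel]
    linarith [habs]
  -- telescoping
  have htele : ∀ n : ℕ, A n ≤ A 0 + ∑ j ∈ Finset.range n, (vth j * δ + ee j) := by
    intro n
    induction n with
    | zero => simp
    | succ n ih =>
      rw [Finset.sum_range_succ]
      have := hstep n
      linarith
  -- nonnegativity of the Bregman distance at step K
  have hDK : 0 ≤ breg φ gφ u (z K) :=
    breg_nonneg hstand.hφconv hu.2 (interior_subset (hiter.hz K).2)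
      (hstand.hφsmooth.2.1 _ (hiter.hz K).2)
  have hmain : (θ (K-1))^(-γ)*(P (x K) + f (x K) - (P u + f u))
      ≤ A 0 + ∑ j ∈ Finset.range K, (vth j * δ + ee j) := by
    have h := htele K
    have h2 : A K = (θ (K-1))^(-γ)*(P (x K) + f (x K) - (P u + f u))
        + τ*L*breg φ gφ u (z K) := by simp [hAdef]
    have h3 : 0 ≤ τ*L*breg φ gφ u (z K) := mul_nonneg hLτ hDK
    linarith
  -- sum splitting
  have hsum : ∑ j ∈ Finset.range K, (vth j * δ + ee j)
      = δ * (∑ j ∈ Finset.range K, vth j) + ∑ j ∈ Finset.range K, ee j := by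
    rw [Finset.sum_add_distrib, Finset.mul_sum]
    congr 1
    exact Finset.sum_congr rfl fun j _ => mul_comm _ _
  set p : ℝ := (θ (K-1))^γ with hpdef
  clear_value p
  have hppos : 0 < p := by rw [hpdef]; exact Real.rpow_pos_of_pos (hθpos _) γ
  have hpinv : p * (θ (K-1))^(-γ) = 1 := by
    rw [hpdef, ← Real.rpow_add (hθpos _)]
    simp
  have hKpos : (0:ℝ) < (K:ℝ) := by exact_mod_cast Nat.pos_of_ne_zero (by omega)
  have hα1 : (0:ℝ) < α - 1 := by linarith
  -- p ≤ (α-1)^γ K^{-γ}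
  have hptop : p ≤ (α-1)^γ * ((K:ℝ)^(-γ)) := by
    have h1 := theta_kupper hθ hγ1 K hK
    have h2 : p ≤ ((α-1)/(K:ℝ))^γ := by
      rw [hpdef]; exact Real.rpow_le_rpow (hθpos _).le h1 hγ0.le
    have h3 : ((α-1)/(K:ℝ))^γ = (α-1)^γ * ((K:ℝ)^(-γ)) := by
      rw [Real.div_rpow hα1.le (Nat.cast_nonneg K), Real.rpow_neg (Nat.cast_nonneg K),
        div_eq_mul_inv]
    linarith
  -- bound on ∑ vth
  have hccpos : 0 < θ 1 := hθpos 1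
  have hvthsum : ∑ j ∈ Finset.range K, vth j
      ≤ 1 + ∑ j ∈ Finset.range K, (θ j)^((1:ℝ)-γ) := by
    have hterm : ∀ j : ℕ, vth j
        = ((θ (j-1))^(-γ) - (θ ((j+1)-1))^(-γ)) + (θ j)^((1:ℝ)-γ) := by
      intro j
      have hm : (θ j) * (θ j)^(-γ) = (θ j)^((1:ℝ)-γ) := by
        rw [show (1:ℝ)-γ = 1 + -γ by ring, Real.rpow_add (hθpos j), Real.rpow_one]
      simp only [hvth, Nat.add_sub_cancel]
      rw [← hm]; ring
    calc ∑ j ∈ Finset.range K, vth j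
        = ∑ j ∈ Finset.range K, (((θ (j-1))^(-γ) - (θ ((j+1)-1))^(-γ)) + (θ j)^((1:ℝ)-γ)) :=
          Finset.sum_congr rfl fun j _ => hterm j
      _ = ((θ (0-1))^(-γ) - (θ (K-1))^(-γ)) + ∑ j ∈ Finset.range K, (θ j)^((1:ℝ)-γ) := by
          rw [Finset.sum_add_distrib, Finset.sum_range_sub' (fun j => (θ (j-1))^(-γ))]
      _ ≤ 1 + ∑ j ∈ Finset.range K, (θ j)^((1:ℝ)-γ) := by
          have h1 : (θ ((0:ℕ)-1))^(-γ) = 1 := by norm_num [hθ0eq]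
          have h2 : 0 ≤ (θ (K-1))^(-γ) := Real.rpow_nonneg (hθpos _).le _
          linarith
  have hθ1γ : ∀ j ∈ Finset.range K, (θ j)^((1:ℝ)-γ) ≤ (θ 1/(K:ℝ))^((1:ℝ)-γ) := by
    intro j hj
    have hjK : (j:ℝ) + 1 ≤ (K:ℝ) := by
      have := Finset.mem_range.1 hj
      exact_mod_cast this
    have h1 : θ 1/(K:ℝ) ≤ θ 1/((j:ℝ)+1) :=
      div_le_div_of_nonneg_left hccpos.le (by positivity) hjK
    have h2 : θ 1/(K:ℝ) ≤ θ j := h1.trans (theta_lower hθ hγ1 j)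
    exact Real.rpow_le_rpow_of_nonpos (by positivity) h2 (by linarith)
  have hsum2 : ∑ j ∈ Finset.range K, (θ j)^((1:ℝ)-γ) ≤ (K:ℝ) * (θ 1/(K:ℝ))^((1:ℝ)-γ) := by
    have := Finset.sum_le_card_nsmul (Finset.range K) (fun j => (θ j)^((1:ℝ)-γ))
      ((θ 1/(K:ℝ))^((1:ℝ)-γ)) hθ1γ
    simpa [Finset.card_range, nsmul_eq_mul] using this
  have hvnn : 0 ≤ ∑ j ∈ Finset.range K, vth j := Finset.sum_nonneg fun j _ => hvth0 j
  -- the rpow computation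
  have hecomp : ((K:ℝ)^(-γ)) * ((K:ℝ) * (θ 1/(K:ℝ))^((1:ℝ)-γ)) = (θ 1)^((1:ℝ)-γ) := by
    rw [Real.div_rpow hccpos.le (Nat.cast_nonneg K)]
    have h1 : (K:ℝ)^((1:ℝ)-γ) = (K:ℝ) * ((K:ℝ)^(-γ)) := by
      rw [show (1:ℝ)-γ = 1 + -γ by ring, Real.rpow_add hKpos, Real.rpow_one]
    rw [h1]
    have h2 : ((K:ℝ)^(-γ)) ≠ 0 := (Real.rpow_pos_of_pos hKpos _).ne'
    field_simp
    try ring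
  have hKinv1 : ((K:ℝ))^(-γ) ≤ 1 :=
    Real.rpow_le_one_of_one_le_of_nonpos (by exact_mod_cast hK) (by linarith)
  have hBB : p * (∑ j ∈ Finset.range K, vth j)
      ≤ (α-1)^γ + (α-1)^γ * (θ 1)^((1:ℝ)-γ) := by
    have hb1 : ∑ j ∈ Finset.range K, vth j ≤ 1 + (K:ℝ) * (θ 1/(K:ℝ))^((1:ℝ)-γ) := by
      linarith
    have hb2 : p * (∑ j ∈ Finset.range K, vth j)
        ≤ ((α-1)^γ * ((K:ℝ)^(-γ))) * (1 + (K:ℝ) * (θ 1/(K:ℝ))^((1:ℝ)-γ)) := by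
      apply mul_le_mul hptop hb1 hvnn
      positivity
    have hb3 : ((α-1)^γ * ((K:ℝ)^(-γ))) * (1 + (K:ℝ) * (θ 1/(K:ℝ))^((1:ℝ)-γ))
        = (α-1)^γ * ((K:ℝ)^(-γ)) + (α-1)^γ * (((K:ℝ)^(-γ)) * ((K:ℝ) * (θ 1/(K:ℝ))^((1:ℝ)-γ))) := by
      ring
    rw [hb3, hecomp] at hb2
    have hb4 : (α-1)^γ * ((K:ℝ)^(-γ)) ≤ (α-1)^γ := by
      have := Real.rpow_nonneg hα1.le γ
      nlinarith
    linarith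
  -- bound on ∑ ee
  have heent : ∀ j ∈ Finset.range K, ee j ≤ (θ j)^((1:ℝ)-γ)*ν j
      + M*((θ j)^((1:ℝ)-γ)*η j*(‖zt (j+1)‖+1)) + τ*L*μ j := by
    intro j _
    have hbound : ‖u‖ + ‖zt (j+1)‖ ≤ M*(‖zt (j+1)‖+1) := by
      have h1 : M * ‖zt (j+1)‖ ≥ 1 * ‖zt (j+1)‖ :=
        mul_le_mul_of_nonneg_right hM1 (norm_nonneg _)
      nlinarith [norm_nonneg (zt (j+1))]
    have hne : 0 ≤ (θ j)^((1:ℝ)-γ)*η j :=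
      mul_nonneg (Real.rpow_nonneg (hθpos j).le _) (hiter.hη j)
    have h3 := mul_le_mul_of_nonneg_left hbound hne
    simp only [hee]
    linarith [h3]
  have heesum : ∑ j ∈ Finset.range K, ee j
      ≤ ∑ i ∈ Finset.range K, (θ i)^((1:ℝ)-γ)*ν i
        + M * (∑ i ∈ Finset.range K, (θ i)^((1:ℝ)-γ)*η i*(‖zt (i+1)‖+1))
        + τ*L * (∑ i ∈ Finset.range K, μ i) := by
    have h1 := Finset.sum_le_sum heent
    have h2 : ∑ j ∈ Finset.range K, ((θ j)^((1:ℝ)-γ)*ν j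
        + M*((θ j)^((1:ℝ)-γ)*η j*(‖zt (j+1)‖+1)) + τ*L*μ j)
        = ∑ i ∈ Finset.range K, (θ i)^((1:ℝ)-γ)*ν i
          + M * (∑ i ∈ Finset.range K, (θ i)^((1:ℝ)-γ)*η i*(‖zt (i+1)‖+1))
          + τ*L * (∑ i ∈ Finset.range K, μ i) := by
      simp [Finset.sum_add_distrib, Finset.mul_sum]
    linarith [h1, h2.le, h2.ge]
  have heenn : 0 ≤ ∑ j ∈ Finset.range K, ee j := by
    apply Finset.sum_nonneg
    intro j _
    have h1 : 0 ≤ (θ j)^((1:ℝ)-γ) := Real.rpow_nonneg (hθpos j).le _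
    have h2 : 0 ≤ ‖u‖ + ‖zt (j+1)‖ := by positivity
    simp only [hee]
    exact add_nonneg (add_nonneg (mul_nonneg h1 (hiter.hν j))
      (mul_nonneg h1 (mul_nonneg (hiter.hη j) h2))) (mul_nonneg hLτ (hiter.hμ j))
  have hEE : p * (∑ j ∈ Finset.range K, ee j)
      ≤ (α-1)^γ * (((K:ℝ)^(-γ)) * ∑ i ∈ Finset.range K, (θ i)^((1:ℝ)-γ)*ν i
        + M * (((K:ℝ)^(-γ)) * ∑ i ∈ Finset.range K, (θ i)^((1:ℝ)-γ)*η i*(‖zt (i+1)‖+1))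
        + τ*L * (((K:ℝ)^(-γ)) * ∑ i ∈ Finset.range K, μ i)) := by
    have h2 : p * (∑ j ∈ Finset.range K, ee j)
        ≤ ((α-1)^γ * ((K:ℝ)^(-γ))) * (∑ i ∈ Finset.range K, (θ i)^((1:ℝ)-γ)*ν i
          + M * (∑ i ∈ Finset.range K, (θ i)^((1:ℝ)-γ)*η i*(‖zt (i+1)‖+1))
          + τ*L * (∑ i ∈ Finset.range K, μ i)) := by
      apply mul_le_mul hptop (by linarith) heenn
      positivity
    calc p * (∑ j ∈ Finset.range K, ee j) ≤ _ := h2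
      _ = (α-1)^γ * (((K:ℝ)^(-γ)) * ∑ i ∈ Finset.range K, (θ i)^((1:ℝ)-γ)*ν i
        + M * (((K:ℝ)^(-γ)) * ∑ i ∈ Finset.range K, (θ i)^((1:ℝ)-γ)*η i*(‖zt (i+1)‖+1))
        + τ*L * (((K:ℝ)^(-γ)) * ∑ i ∈ Finset.range K, μ i)) := by ring
  -- assemble
  have hA0 : A 0 = P (x 0) + f (x 0) - (P u + f u) + τ*L*breg φ gφ u (z 0) := by
    simp [hAdef, hθ0eq]
  have haK : P (x K) + f (x K) - (P u + f u)
      ≤ p * A 0 + δ * (p * ∑ j ∈ Finset.range K, vth j) + p * (∑ j ∈ Finset.range K, ee j) := by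
    have h2 := mul_le_mul_of_nonneg_left hmain hppos.le
    have h3 : p * ((θ (K-1))^(-γ)*(P (x K) + f (x K) - (P u + f u)))
        = P (x K) + f (x K) - (P u + f u) := by
      rw [← mul_assoc, hpinv, one_mul]
    rw [hsum] at h2
    rw [h3] at h2
    linarith [h2]
  have hpA0 : p * A 0 ≤ ((α-1)^γ * ((K:ℝ)^(-γ))) *
      |P (x 0) + f (x 0) - (P u + f u) + τ*L*breg φ gφ u (z 0)| := by
    rw [hA0]
    calc p * (P (x 0) + f (x 0) - (P u + f u) + τ*L*breg φ gφ u (z 0))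
        ≤ p * |P (x 0) + f (x 0) - (P u + f u) + τ*L*breg φ gφ u (z 0)| :=
          mul_le_mul_of_nonneg_left (le_abs_self _) hppos.le
      _ ≤ _ := mul_le_mul_of_nonneg_right hptop (abs_nonneg _)
  have hδB := mul_le_mul_of_nonneg_left hBB hδ0
  simp only [hδdef] at haK hδB ⊢
  linarith [haK, hpA0, hδB, hEE]

/-- **Function value convergence of v-iBPG** (Theorem 4.1(ii)). Under the standing assumptions
and the restricted relative smoothness exponent assumption, if
`k^{−γ} Σ_{i<k} θ_i^{1−γ} η_i (‖z̃^{i+1}‖+1) → 0`, `k^{−γ} Σ_{i<k} μ_i → 0` and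
`k^{−γ} Σ_{i<k} θ_i^{1−γ} ν_i → 0`, then `F(x^k) → F*`, where `F = P + f` and
`F* = inf {F x : x ∈ Q} > −∞`. -/
theorem vIBPG_value_convergence
    {E : Type*} [NormedAddCommGroup E] [InnerProductSpace ℝ E] [FiniteDimensional ℝ E]
    (Q domφ domP domf X : Set E) (φ P f : E → ℝ) (gφ gf : E → E) (L τ γ α : ℝ)
    (hstand : Standing Q domφ domP domf X φ P f gφ gf L)
    (hrrse : RestrictedRelSmoothExponent domφ domP X φ f gφ gf L τ γ)
    (θ η μ ν : ℕ → ℝ) (hθ : ThetaSeq γ α θ)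
    (x y z zt : ℕ → E)
    (hiter : VIBPGIter domφ domP X φ P gφ gf L τ γ θ η μ ν x y z zt)
    (Fstar : ℝ) (hFstar : IsGLB ((fun u => P u + f u) '' (domP ∩ domf ∩ Q)) Fstar)
    (h1 : Tendsto (fun k : ℕ =>
            (k : ℝ) ^ (-γ) * ∑ i ∈ Finset.range k, θ i ^ (1 - γ) * η i * (‖zt (i+1)‖ + 1))
          atTop (𝓝 0))
    (h2 : Tendsto (fun k : ℕ => (k : ℝ) ^ (-γ) * ∑ i ∈ Finset.range k, μ i) atTop (𝓝 0))
    (h3 : Tendsto (fun k : ℕ =>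
            (k : ℝ) ^ (-γ) * ∑ i ∈ Finset.range k, θ i ^ (1 - γ) * ν i) atTop (𝓝 0)) :
    Tendsto (fun k : ℕ => P (x k) + f (x k)) atTop (𝓝 Fstar) := by
  classical
  have hγ1 : 1 ≤ γ := hrrse.2.1
  have hγ0 : (0:ℝ) < γ := by linarith
  have hαγ : γ + 1 ≤ α := hθ.2.2.1
  have hα1 : (0:ℝ) < α - 1 := by linarith
  have hLτ : 0 ≤ τ*L := mul_nonneg hrrse.1.le hstand.hLnn
  have hθpos : ∀ k, 0 < θ k := fun k => (hθ.2.1 k).1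
  have hθle1 : ∀ k, θ k ≤ 1 := fun k => (hθ.2.1 k).2
  have hdomφconv : Convex ℝ domφ := hstand.hφconv.1
  have hdomPconv : Convex ℝ domP := hstand.hPconv.1
  have hdomφQ : domφ ⊆ Q := by rw [← hstand.hφQ]; exact subset_closure
  have hlb : ∀ v, v ∈ domP ∩ domφ → Fstar ≤ P v + f v := by
    intro v hv
    exact hFstar.1 ⟨v, ⟨⟨hv.1, hstand.hfdom hv.2⟩, hdomφQ hv.2⟩, rfl⟩
  have hxmem : ∀ k, x k ∈ domP ∩ domφ := by
    intro k
    induction k with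
    | zero => exact hiter.hx0
    | succ k ih =>
      rw [hiter.hxrec k]
      exact ⟨hdomPconv ih.1 (hiter.hzt k).1 (by linarith [hθle1 k]) (hθpos k).le (by ring),
        hdomφconv ih.2 (hiter.hzt k).2 (by linarith [hθle1 k]) (hθpos k).le (by ring)⟩
  have hxlb : ∀ k, Fstar ≤ P (x k) + f (x k) := fun k => hlb _ (hxmem k)
  -- interior Q ⊆ interior domφ
  have hIQ : interior Q ⊆ interior domφ := by
    intro pt hpt
    obtain ⟨w0, hw0⟩ := hstand.hφsmooth.1
    by_cases hpw : pt = w0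
    · rwa [hpw]
    have hnorm : 0 < ‖pt - w0‖ := by
      rw [norm_pos_iff]
      exact sub_ne_zero.2 hpw
    obtain ⟨ρ, hρ0, hball⟩ := Metric.isOpen_iff.1 isOpen_interior pt hpt
    set r : ℝ := ρ/(2*‖pt - w0‖) with hr
    have hr0 : 0 < r := by positivity
    have hp' : pt + r•(pt - w0) ∈ interior Q := by
      apply hball
      rw [Metric.mem_ball, dist_eq_norm, show pt + r•(pt-w0) - pt = r•(pt-w0) by module,
        norm_smul, Real.norm_eq_abs, abs_of_pos hr0, hr, div_mul_eq_mul_div,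
        div_lt_iff₀ (by positivity)]
      nlinarith
    have hp'' : pt + r•(pt - w0) ∈ closure domφ := by
      rw [hstand.hφQ]; exact interior_subset hp'
    have h1r : (0:ℝ) < 1 + r := by linarith
    have hcombo : pt = (r/(1+r))•w0 + (1/(1+r))•(pt + r•(pt - w0)) := by
      match_scalars <;> (field_simp; try ring)
    rw [hcombo]
    exact hdomφconv.combo_interior_closure_mem_interior hw0 hp''
      (by positivity) (by positivity) (by field_simp <;> ring)
  -- B
  set B : ℝ := (α-1)^γ + (α-1)^γ * (θ 1)^((1:ℝ)-γ) with hBdef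
  have hB0 : 0 ≤ B := by
    rw [hBdef]
    have h1 : (0:ℝ) ≤ (α-1)^γ := Real.rpow_nonneg hα1.le γ
    have h2 : (0:ℝ) ≤ (θ 1)^((1:ℝ)-γ) := Real.rpow_nonneg (hθpos 1).le _
    nlinarith
  clear_value B
  have hB1 : (0:ℝ) < B + 1 := by linarith
  rw [Metric.tendsto_atTop]
  intro ε hε
  set ε' : ℝ := ε/(2*(B+1)) with hε'def
  have hε'0 : 0 < ε' := by rw [hε'def]; positivity
  -- pick v near the infimum
  obtain ⟨rr, hrmem, hr1, hr2⟩ := hFstar.exists_between (show Fstar < Fstar + ε'/2 by linarith)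
  obtain ⟨v, hvmem, hveq⟩ := hrmem
  obtain ⟨x₀, hx₀P, hx₀Q⟩ := hstand.hPQ
  have hx₀i : x₀ ∈ interior domφ := hIQ hx₀Q
  have hx₀φ : x₀ ∈ domφ := interior_subset hx₀i
  -- small combination parameter
  set q0 : ℝ := |P x₀ + f x₀ - (P v + f v)| with hq0def
  have hq00 : 0 ≤ q0 := abs_nonneg _
  set t : ℝ := min (1/2) ((ε'/2)/(q0+1)) with htdef
  have ht0 : 0 < t := by
    rw [htdef]
    apply lt_min (by norm_num)
    positivity
  have ht1 : t ≤ 1/2 := by rw [htdef]; exact min_le_left _ _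
  have htq : t*(P x₀ + f x₀ - (P v + f v)) < ε'/2 := by
    have h1 : t*(P x₀ + f x₀ - (P v + f v)) ≤ t*q0 :=
      mul_le_mul_of_nonneg_left (le_abs_self _) ht0.le
    have h2 : t ≤ (ε'/2)/(q0+1) := by rw [htdef]; exact min_le_right _ _
    have h3 : t*q0 ≤ ((ε'/2)/(q0+1))*q0 := mul_le_mul_of_nonneg_right h2 hq00
    have h4 : ((ε'/2)/(q0+1))*q0 < ε'/2 := by
      rw [div_mul_eq_mul_div, div_lt_iff₀ (by linarith : (0:ℝ) < q0+1)]
      nlinarith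
    linarith
  -- the comparison point u
  set u : E := t•x₀ + (1-t)•v with hudef
  have hvQc : v ∈ closure domφ := by rw [hstand.hφQ]; exact hvmem.2
  have huφ : u ∈ domφ := by
    rw [hudef]
    exact interior_subset (hdomφconv.combo_interior_closure_mem_interior hx₀i hvQc
      ht0 (by linarith) (by ring))
  have huP : u ∈ domP := by
    rw [hudef]
    exact hdomPconv hx₀P hvmem.1.1 ht0.le (by linarith) (by ring)
  have hu : u ∈ domP ∩ domφ := ⟨huP, huφ⟩
  have hFu : P u + f u - Fstar < ε' := by
    have hP : P u ≤ t*P x₀ + (1-t)*P v := by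
      rw [hudef]
      exact hstand.hPconv.2 hx₀P hvmem.1.1 ht0.le (by linarith) (by ring)
    have hf : f u ≤ t*f x₀ + (1-t)*f v := by
      rw [hudef]
      exact hstand.hfconv.2 (hstand.hfdom hx₀φ) hvmem.1.2 ht0.le (by linarith) (by ring)
    have hvr : P v + f v < Fstar + ε'/2 := by
      rw [show P v + f v = rr from hveq]; exact hr2
    nlinarith
  have hδ0 : 0 ≤ P u + f u - Fstar := by have := hlb u hu; linarith
  -- abbreviations for the error sums
  set C0 : ℝ := |P (x 0) + f (x 0) - (P u + f u) + τ*L*breg φ gφ u (z 0)| with hC0def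
  set M : ℝ := max 1 ‖u‖ with hMdef
  set G : ℕ → ℝ := fun K => (α-1)^γ * ((K:ℝ)^(-γ)) * C0
      + (α-1)^γ * (((K:ℝ)^(-γ)) * ∑ i ∈ Finset.range K, (θ i)^((1:ℝ)-γ)*ν i
          + M * (((K:ℝ)^(-γ)) * ∑ i ∈ Finset.range K, (θ i)^((1:ℝ)-γ)*η i*(‖zt (i+1)‖+1))
          + τ*L * (((K:ℝ)^(-γ)) * ∑ i ∈ Finset.range K, μ i)) with hGdef
  have hGval : ∀ K : ℕ, G K = (α-1)^γ * ((K:ℝ)^(-γ)) * C0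
      + (α-1)^γ * (((K:ℝ)^(-γ)) * ∑ i ∈ Finset.range K, (θ i)^((1:ℝ)-γ)*ν i
          + M * (((K:ℝ)^(-γ)) * ∑ i ∈ Finset.range K, (θ i)^((1:ℝ)-γ)*η i*(‖zt (i+1)‖+1))
          + τ*L * (((K:ℝ)^(-γ)) * ∑ i ∈ Finset.range K, μ i)) := fun K => by rw [hGdef]
  clear_value G
  have hG : Tendsto G atTop (nhds 0) := by
    have hKγ : Tendsto (fun K : ℕ => ((K:ℝ)^(-γ))) atTop (nhds 0) :=
      (tendsto_rpow_neg_atTop hγ0).comp tendsto_natCast_atTop_atTop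
    have t1 : Tendsto (fun K : ℕ => (α-1)^γ * ((K:ℝ)^(-γ)) * C0) atTop (nhds 0) := by
      have := (hKγ.const_mul ((α-1)^γ)).mul_const C0
      simpa using this
    have t2 : Tendsto (fun K : ℕ => ((K:ℝ)^(-γ)) * ∑ i ∈ Finset.range K, (θ i)^((1:ℝ)-γ)*ν i
        + M * (((K:ℝ)^(-γ)) * ∑ i ∈ Finset.range K, (θ i)^((1:ℝ)-γ)*η i*(‖zt (i+1)‖+1))
        + τ*L * (((K:ℝ)^(-γ)) * ∑ i ∈ Finset.range K, μ i)) atTop (nhds 0) := by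
      have := ((h3.add (h1.const_mul M)).add (h2.const_mul (τ*L)))
      simp only [mul_zero, add_zero] at this
      exact this
    have t3 := t1.add (t2.const_mul ((α-1)^γ))
    simp only [mul_zero, add_zero] at t3
    have heq : G = fun K : ℕ => (α-1)^γ * ((K:ℝ)^(-γ)) * C0
      + (α-1)^γ * (((K:ℝ)^(-γ)) * ∑ i ∈ Finset.range K, (θ i)^((1:ℝ)-γ)*ν i
          + M * (((K:ℝ)^(-γ)) * ∑ i ∈ Finset.range K, (θ i)^((1:ℝ)-γ)*η i*(‖zt (i+1)‖+1))
          + τ*L * (((K:ℝ)^(-γ)) * ∑ i ∈ Finset.range K, μ i)) := funext hGval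
    rw [heq]
    convert t3 using 2 <;> ring
  have hbound : ∀ K : ℕ, 1 ≤ K →
      P (x K) + f (x K) - Fstar ≤ (P u + f u - Fstar)*(B+1) + G K := by
    intro K hK
    have hm := master_bound Q domφ domP domf X φ P f gφ gf L τ γ α hstand hrrse
      θ η μ ν hθ x y z zt hiter Fstar hlb u hu K hK
    rw [← hC0def, ← hMdef] at hm
    rw [hGval K, hBdef]
    linarith [hm]
  have hδB1 : (P u + f u - Fstar)*(B+1) < ε/2 := by
    have hh1 : (P u + f u - Fstar)*(B+1) < ε'*(B+1) :=
      mul_lt_mul_of_pos_right hFu hB1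
    have hh2 : ε'*(B+1) = ε/2 := by
      rw [hε'def]
      field_simp
    linarith
  have hsmall : ∀ᶠ K in atTop, G K < ε/2 := hG.eventually (gt_mem_nhds (by linarith))
  obtain ⟨N, hN⟩ := eventually_atTop.1 (hsmall.and (eventually_ge_atTop 1))
  refine ⟨max N 1, fun n hn => ?_⟩
  obtain ⟨hg, hn1⟩ := hN n (le_trans (le_max_left _ _) hn)
  have hup := hbound n hn1
  have hlo := hxlb n
  rw [Real.dist_eq, abs_lt]
  constructor <;> linarith
end

section
/- O(1/k^γ) iteration complexity of v-iBPG: under the standing assumptions and the restricted relative smoothness exponent assumption, if Σ_k θ_k^{1−γ}·η_k·(‖z̃^{k+1}‖+1) < ∞, Σ_k μ_k < ∞, Σ_k θ_k^{1−γ}·ν_k < ∞, and the problem inf{F(x) : x ∈ Q} has an optimal solution x* ∈ dom φ, then there exists a constant C ≥ 0 such that F(x^k) − F* ≤ C/k^γ for all k ≥ 1. -/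
open Filter Topology RealInnerProductSpace

/-- Gradient inequality for a convex function at an interior point of its domain. -/
lemma grad_ineq {E : Type*} [NormedAddCommGroup E] [InnerProductSpace ℝ E] [CompleteSpace E]
    {s : Set E} {h : E → ℝ} (hc : ConvexOn ℝ s h) {u v g : E}
    (hu : u ∈ interior s) (hg : HasGradientAt h g u) (hv : v ∈ s) :
    h u + ⟪g, v - u⟫ ≤ h v := by
  have hus : u ∈ s := interior_subset hu
  set q : ℝ → ℝ := fun t => h (u + t • (v - u)) with hqdef
  have hline : HasDerivAt (fun t : ℝ => u + t • (v - u)) (v - u) 0 := by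
    simpa using ((hasDerivAt_id (0:ℝ)).smul_const (v - u)).const_add u
  have hq' : HasDerivAt q ⟪g, v - u⟫ 0 := by
    have h0 : HasFDerivAt h (InnerProductSpace.toDual ℝ E g) (u + (0:ℝ) • (v - u)) := by
      simpa using hg.hasFDerivAt
    have := h0.comp_hasDerivAt 0 hline
    exact (by simpa [InnerProductSpace.toDual_apply_apply] using this :
      HasDerivAt (h ∘ fun t : ℝ => u + t • (v - u)) ⟪g, v - u⟫ 0)
  have hslope : Tendsto (slope q 0) (𝓝[>] (0:ℝ)) (𝓝 ⟪g, v - u⟫) :=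
    (hasDerivAt_iff_tendsto_slope.mp hq').mono_left
      (nhdsWithin_mono 0 (fun t ht => ne_of_gt ht))
  have hle : ⟪g, v - u⟫ ≤ h v - h u := by
    refine le_of_tendsto hslope ?_
    filter_upwards [Ioo_mem_nhdsGT_of_mem (Set.mem_Ico.mpr ⟨le_refl (0:ℝ), one_pos⟩)] with t ht
    have ht0 : (0:ℝ) < t := ht.1
    have ht1 : t < 1 := ht.2
    have hmem := hc.2 hus hv (by linarith : (0:ℝ) ≤ 1 - t) ht0.le (by ring)
    have hpt : u + t • (v - u) = (1 - t) • u + t • v := by module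
    have hq0 : q 0 = h u := by simp [hqdef]
    have hqt : q t ≤ (1 - t) * h u + t * h v := by
      rw [hqdef]; simpa [hpt] using hmem
    have hs : slope q 0 t = (q t - h u) / t := by
      rw [slope_def_field, hq0]; ring_nf
    rw [hs, div_le_iff₀ ht0]
    nlinarith
  linarith

set_option maxHeartbeats 1000000 in
/-- **O(1/k^γ) iteration complexity of v-iBPG** (Theorem 4.1(iii)). Under the standing
assumptions and the restricted relative smoothness exponent assumption, if
`Σ_k θ_k^{1−γ} η_k (‖z̃^{k+1}‖+1) < ∞`, `Σ_k μ_k < ∞`, `Σ_k θ_k^{1−γ} ν_k < ∞`, and the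
problem has an optimal solution `x* ∈ dom φ`, then there is `C ≥ 0` with
`F(x^k) − F* ≤ C/k^γ` for all `k ≥ 1`, where `F = P + f`. -/
theorem vIBPG_iteration_complexity
    {E : Type*} [NormedAddCommGroup E] [InnerProductSpace ℝ E] [FiniteDimensional ℝ E]
    (Q domφ domP domf X : Set E) (φ P f : E → ℝ) (gφ gf : E → E) (L τ γ α : ℝ)
    (hstand : Standing Q domφ domP domf X φ P f gφ gf L)
    (hrrse : RestrictedRelSmoothExponent domφ domP X φ f gφ gf L τ γ)
    (θ η μ ν : ℕ → ℝ) (hθ : ThetaSeq γ α θ)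
    (x y z zt : ℕ → E)
    (hiter : VIBPGIter domφ domP X φ P gφ gf L τ γ θ η μ ν x y z zt)
    (Fstar : ℝ) (hFstar : IsGLB ((fun u => P u + f u) '' (domP ∩ domf ∩ Q)) Fstar)
    (h1 : Summable (fun k : ℕ => θ k ^ (1 - γ) * η k * (‖zt (k+1)‖ + 1)))
    (h2 : Summable μ)
    (h3 : Summable (fun k : ℕ => θ k ^ (1 - γ) * ν k))
    (xstar : E) (hxstar : xstar ∈ domP ∩ domφ)
    (hopt : ∀ u ∈ domP ∩ domf ∩ Q, P xstar + f xstar ≤ P u + f u) :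
    ∃ C : ℝ, 0 ≤ C ∧ ∀ k : ℕ, 1 ≤ k →
      (P (x k) + f (x k)) - Fstar ≤ C / (k : ℝ) ^ γ := by
  obtain ⟨hθ0eq, hθmem, hαγ, hθle, hϑ⟩ := hθ
  obtain ⟨hτ, hγ1, hC⟩ := hrrse
  have hγ0 : (0:ℝ) ≤ γ := by linarith
  have hα2 : (2:ℝ) ≤ α := by linarith
  have hτL : (0:ℝ) ≤ τ * L := mul_nonneg hτ.le hstand.hLnn
  -- memberships of the iterates
  have hxmem : ∀ k, x k ∈ domP ∩ domφ := by
    intro k; induction k with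
    | zero => exact hiter.hx0
    | succ n ih =>
      rw [hiter.hxrec n]
      have hθn := hθmem n
      exact ⟨hstand.hPconv.1 ih.1 (hiter.hzt n).1 (by linarith [hθn.2]) hθn.1.le (by ring),
             hstand.hφconv.1 ih.2 (hiter.hzt n).2 (by linarith [hθn.2]) hθn.1.le (by ring)⟩
  have hymem : ∀ k, y k ∈ interior domφ := by
    intro k
    rw [hiter.hy k, add_comm]
    exact hstand.hφconv.1.combo_interior_self_mem_interior (hiter.hz k).2 (hxmem k).2
      (hθmem k).1 (by linarith [(hθmem k).2]) (by ring)
  have hQsub : domφ ⊆ Q := hstand.hφQ ▸ subset_closure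
  have hfeas : ∀ u ∈ domP ∩ domφ, u ∈ domP ∩ domf ∩ Q :=
    fun u hu => ⟨⟨hu.1, hstand.hfdom hu.2⟩, hQsub hu.2⟩
  have hFlb : ∀ k, Fstar ≤ P (x k) + f (x k) :=
    fun k => hFstar.1 ⟨x k, hfeas _ (hxmem k), rfl⟩
  have hFs : P xstar + f xstar = Fstar := by
    refine le_antisymm (hFstar.2 ?_) (hFstar.1 ⟨xstar, hfeas _ hxstar, rfl⟩)
    rintro b ⟨u, hu, rfl⟩
    exact hopt u hu
  have hB0 : ∀ k, 0 ≤ breg φ gφ xstar (z k) := by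
    intro k
    have := grad_ineq hstand.hφconv (hiter.hz k).2
      (hstand.hφsmooth.2.1 _ (hiter.hz k).2) hxstar.2
    simp only [breg]; linarith
  -- the key one-step inequality
  have key : ∀ k : ℕ,
      θ k ^ (-γ) * (P (x (k+1)) + f (x (k+1)) - Fstar) + τ*L*breg φ gφ xstar (z (k+1)) ≤
      (1 - θ k) * θ k ^ (-γ) * (P (x k) + f (x k) - Fstar) + τ*L*breg φ gφ xstar (z k)
        + θ k ^ (1-γ) * (η k * (‖zt (k+1)‖ + ‖xstar‖) + ν k) + τ*L*μ k := by
    intro k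
    obtain ⟨d, hd, hΔ⟩ := hiter.hinex k
    have hθk := hθmem k
    have hθ0 : 0 < θ k := hθk.1
    have hθ1 : θ k ≤ 1 := hθk.2
    set c : ℝ := τ * L * θ k ^ (γ - 1) with hc
    set Δ : E := d + gf (y k) + c • (gφ (z (k+1)) - gφ (z k)) with hΔdef
    set Gz : ℝ := ⟪gf (y k), zt (k+1) - z k⟫ with hGz
    set Gx : ℝ := ⟪gf (y k), zt (k+1) - xstar⟫ with hGxdef
    set J : ℝ := ⟪gφ (z (k+1)) - gφ (z k), zt (k+1) - xstar⟫ with hJ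
    set I1 : ℝ := ⟪Δ, zt (k+1) - xstar⟫ with hI1def
    -- rpow facts
    have hpow1 : θ k ^ (γ - 1) * θ k = θ k ^ γ := by
      have h := (Real.rpow_add hθ0 (γ-1) 1).symm
      rw [Real.rpow_one] at h
      rw [h]; congr 1; ring
    have hpow2 : θ k ^ (-γ) * θ k ^ γ = 1 := by
      rw [← Real.rpow_add hθ0]; norm_num
    have hpow3 : θ k ^ (-γ) * θ k = θ k ^ (1-γ) := by
      have h := (Real.rpow_add hθ0 (-γ) 1).symm
      rw [Real.rpow_one] at h
      rw [h]; congr 1; ring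
    have hx1 : x (k+1) = (1 - θ k) • x k + θ k • zt (k+1) := hiter.hxrec k
    have hyk : y k = (1 - θ k) • x k + θ k • z k := hiter.hy k
    have hx1y : x (k+1) - y k = θ k • (zt (k+1) - z k) := by rw [hx1, hyk]; module
    have hF2 : f (x (k+1)) = f (y k) + θ k * Gz + breg f gf (x (k+1)) (y k) := by
      have h1' : ⟪gf (y k), x (k+1) - y k⟫ = θ k * Gz := by
        rw [hx1y, real_inner_smul_right]
      simp only [breg]
      rw [h1']; ring
    have hF3 : breg f gf (x (k+1)) (y k) ≤ τ*L*θ k^γ * breg φ gφ (zt (k+1)) (z k) := by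
      have := hC (x k) (hxmem k) (zt (k+1)) (hiter.hzt k) (z k)
        ⟨(hiter.hz k).2, (hiter.hz k).1⟩ (θ k) hθk
      rw [← hx1, ← hyk] at this
      exact this
    have hP1 : P (x (k+1)) ≤ (1 - θ k) * P (x k) + θ k * P (zt (k+1)) := by
      rw [hx1]
      exact hstand.hPconv.2 (hxmem k).1 (hiter.hzt k).1 (by linarith) hθ0.le (by ring)
    have hdec : d = Δ - gf (y k) - c • (gφ (z (k+1)) - gφ (z k)) := by
      rw [hΔdef]; abel
    have hsplit : ⟪d, zt (k+1) - xstar⟫ = I1 - Gx - c * J := by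
      rw [hdec, inner_sub_left, inner_sub_left, real_inner_smul_left, hI1def, hGxdef, hJ]
    have hPz : P (zt (k+1)) ≤ P xstar + (I1 - Gx - c * J) + ν k := by
      have hsub := hd xstar hxstar.1
      have hinn : ⟪d, xstar - zt (k+1)⟫ = -⟪d, zt (k+1) - xstar⟫ := by
        rw [show xstar - zt (k+1) = -(zt (k+1) - xstar) by abel, inner_neg_right]
      rw [hinn, hsplit] at hsub
      linarith
    have hmul := mul_le_mul_of_nonneg_left hPz hθ0.le
    have hcJ : θ k * (c * J) = τ*L*θ k^γ * J := by
      rw [hc]; linear_combination (τ*L*J) * hpow1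
    have hF4 : θ k * P (zt (k+1)) ≤
        θ k * P xstar + θ k * I1 - θ k * Gx - τ*L*θ k^γ * J + θ k * ν k := by
      nlinarith [hmul, hcJ]
    have hI1b : I1 ≤ η k * (‖zt (k+1)‖ + ‖xstar‖) := by
      calc I1 ≤ ‖Δ‖ * ‖zt (k+1) - xstar‖ := real_inner_le_norm _ _
      _ ≤ η k * (‖zt (k+1)‖ + ‖xstar‖) :=
        mul_le_mul hΔ (norm_sub_le _ _) (norm_nonneg _) (hiter.hη k)
    have hF5 : θ k * I1 ≤ θ k * (η k * (‖zt (k+1)‖ + ‖xstar‖)) :=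
      mul_le_mul_of_nonneg_left hI1b hθ0.le
    have hwmem : (1 - θ k) • x k + θ k • xstar ∈ domφ :=
      hstand.hφconv.1 (hxmem k).2 hxstar.2 (by linarith) hθ0.le (by ring)
    have hw1 := grad_ineq hstand.hfconv
      (interior_mono hstand.hfdom (hymem k)) (hstand.hfgrad _ (hymem k)) (hstand.hfdom hwmem)
    have hw2 : f ((1 - θ k) • x k + θ k • xstar) ≤ (1 - θ k) * f (x k) + θ k * f xstar :=
      hstand.hfconv.2 (hstand.hfdom (hxmem k).2) (hstand.hfdom hxstar.2)
        (by linarith) hθ0.le (by ring)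
    have hwy : ((1 - θ k) • x k + θ k • xstar) - y k = θ k • (xstar - z k) := by
      rw [hyk]; module
    have hGsub : Gz - Gx = ⟪gf (y k), xstar - z k⟫ := by
      rw [hGz, hGxdef, ← inner_sub_right]
      congr 1; abel
    have hGzx : θ k * Gz - θ k * Gx =
        ⟪gf (y k), ((1 - θ k) • x k + θ k • xstar) - y k⟫ := by
      rw [hwy, real_inner_smul_right, ← hGsub]; ring
    have hF6 : f (y k) + θ k * Gz - θ k * Gx ≤ (1 - θ k) * f (x k) + θ k * f xstar := by
      linarith [hw1, hw2, hGzx]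
    have h3pt : breg φ gφ (zt (k+1)) (z k) - J =
        breg φ gφ xstar (z k) - breg φ gφ xstar (z (k+1))
          + breg φ gφ (zt (k+1)) (z (k+1)) := by
      simp only [breg, hJ, inner_sub_left, inner_sub_right]; ring
    have h9 := hiter.hdist k
    have hBJ : breg φ gφ (zt (k+1)) (z k) - J ≤
        breg φ gφ xstar (z k) - breg φ gφ xstar (z (k+1)) + μ k := by linarith
    have hspos : (0:ℝ) ≤ τ*L*θ k^γ :=
      mul_nonneg hτL (Real.rpow_nonneg hθ0.le γ)
    have hF7 := mul_le_mul_of_nonneg_left hBJ hspos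
    have hmain : P (x (k+1)) + f (x (k+1)) ≤
        (1 - θ k) * (P (x k) + f (x k)) + θ k * (P xstar + f xstar)
          + θ k * (η k * (‖zt (k+1)‖ + ‖xstar‖)) + θ k * ν k
          + τ*L*θ k^γ * breg φ gφ xstar (z k) - τ*L*θ k^γ * breg φ gφ xstar (z (k+1))
          + τ*L*θ k^γ * μ k := by
      linarith [hP1, hF2, hF3, hF4, hF5, hF6, hF7]
    have ht : (0:ℝ) < θ k ^ (-γ) := Real.rpow_pos_of_pos hθ0 _
    have h' := mul_le_mul_of_nonneg_left hmain ht.le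
    have hEq : (1 - θ k) * θ k ^ (-γ) * (P (x k) + f (x k) - Fstar)
          + τ*L*breg φ gφ xstar (z k)
          + θ k ^ (1-γ) * (η k * (‖zt (k+1)‖ + ‖xstar‖) + ν k) + τ*L*μ k =
        θ k ^ (-γ) * ((1 - θ k) * (P (x k) + f (x k)) + θ k * (P xstar + f xstar)
          + θ k * (η k * (‖zt (k+1)‖ + ‖xstar‖)) + θ k * ν k
          + τ*L*θ k^γ * breg φ gφ xstar (z k) - τ*L*θ k^γ * breg φ gφ xstar (z (k+1))
          + τ*L*θ k^γ * μ k)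
        + (θ k ^ (-γ) * (P (x (k+1)) + f (x (k+1)) - Fstar)
            + τ*L*breg φ gφ xstar (z (k+1)))
        - θ k ^ (-γ) * (P (x (k+1)) + f (x (k+1))) := by
      linear_combination (-(θ k ^ (-γ) * θ k)) * hFs
        - (τ*L*(breg φ gφ xstar (z k) - breg φ gφ xstar (z (k+1)) + μ k)) * hpow2
        - (η k * (‖zt (k+1)‖ + ‖xstar‖) + ν k) * hpow3
    linarith [h', hEq]
  -- the potential-function recursion
  set A : ℕ → ℝ := fun k =>
    θ (k-1) ^ (-γ) * (P (x k) + f (x k) - Fstar) + τ*L*breg φ gφ xstar (z k) with hAdef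
  set r : ℕ → ℝ := fun k =>
    θ k ^ (1-γ) * (η k * (‖zt (k+1)‖ + ‖xstar‖) + ν k) + τ*L*μ k with hrdef
  have hstep : ∀ k, A (k+1) ≤ A k + r k := by
    intro k
    have hkey := key k
    have he : 0 ≤ P (x k) + f (x k) - Fstar := by linarith [hFlb k]
    have hcoef : (1 - θ k) * θ k ^ (-γ) * (P (x k) + f (x k) - Fstar) ≤
        θ (k-1) ^ (-γ) * (P (x k) + f (x k) - Fstar) := by
      rcases Nat.eq_zero_or_pos k with hk0 | hk1
      · subst hk0
        rw [show (0:ℕ) - 1 = 0 from rfl, hθ0eq, Real.one_rpow]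
        nlinarith
      · exact mul_le_mul_of_nonneg_right (by linarith [hϑ k hk1]) he
    simp only [hAdef, hrdef, Nat.add_sub_cancel]
    linarith [hkey, hcoef]
  have hAsum : ∀ n, A n ≤ A 0 + ∑ j ∈ Finset.range n, r j := by
    intro n; induction n with
    | zero => simp
    | succ m ih => rw [Finset.sum_range_succ]; linarith [hstep m]
  -- bound the error sums
  set R : ℝ := (1 + ‖xstar‖) * (∑' k, θ k ^ (1-γ) * η k * (‖zt (k+1)‖ + 1))
      + (∑' k, θ k ^ (1-γ) * ν k) + τ*L*(∑' k, μ k) with hRdef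
  have hgsummable : Summable (fun j : ℕ =>
      (1 + ‖xstar‖) * (θ j ^ (1-γ) * η j * (‖zt (j+1)‖ + 1))
        + θ j ^ (1-γ) * ν j + τ*L*μ j) :=
    ((h1.mul_left _).add h3).add (h2.mul_left _)
  have hgnn : ∀ j : ℕ, 0 ≤ (1 + ‖xstar‖) * (θ j ^ (1-γ) * η j * (‖zt (j+1)‖ + 1))
        + θ j ^ (1-γ) * ν j + τ*L*μ j := by
    intro j
    have hp : (0:ℝ) ≤ θ j ^ (1-γ) := Real.rpow_nonneg (hθmem j).1.le _
    have hxs : (0:ℝ) ≤ 1 + ‖xstar‖ := by positivity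
    have hz1 : (0:ℝ) ≤ ‖zt (j+1)‖ + 1 := by positivity
    have := hiter.hη j
    have := hiter.hν j
    have := hiter.hμ j
    have t1 : (0:ℝ) ≤ θ j ^ (1-γ) * η j * (‖zt (j+1)‖ + 1) :=
      mul_nonneg (mul_nonneg hp (hiter.hη j)) hz1
    have t2 : (0:ℝ) ≤ θ j ^ (1-γ) * ν j := mul_nonneg hp (hiter.hν j)
    have t3 : (0:ℝ) ≤ τ*L*μ j := mul_nonneg hτL (hiter.hμ j)
    nlinarith
  have hrg : ∀ j : ℕ, r j ≤ (1 + ‖xstar‖) * (θ j ^ (1-γ) * η j * (‖zt (j+1)‖ + 1))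
        + θ j ^ (1-γ) * ν j + τ*L*μ j := by
    intro j
    have hp : (0:ℝ) ≤ θ j ^ (1-γ) := Real.rpow_nonneg (hθmem j).1.le _
    have t1 : (0:ℝ) ≤ θ j ^ (1-γ) * η j := mul_nonneg hp (hiter.hη j)
    have t2 : (0:ℝ) ≤ θ j ^ (1-γ) * η j * (‖xstar‖ * ‖zt (j+1)‖) :=
      mul_nonneg t1 (mul_nonneg (norm_nonneg _) (norm_nonneg _))
    simp only [hrdef]
    nlinarith
  have hrle : ∀ n, ∑ j ∈ Finset.range n, r j ≤ R := by
    intro n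
    calc ∑ j ∈ Finset.range n, r j
        ≤ ∑ j ∈ Finset.range n, ((1 + ‖xstar‖) * (θ j ^ (1-γ) * η j * (‖zt (j+1)‖ + 1))
            + θ j ^ (1-γ) * ν j + τ*L*μ j) := Finset.sum_le_sum (fun j _ => hrg j)
      _ ≤ ∑' j, ((1 + ‖xstar‖) * (θ j ^ (1-γ) * η j * (‖zt (j+1)‖ + 1))
            + θ j ^ (1-γ) * ν j + τ*L*μ j) :=
          Summable.sum_le_tsum _ (fun j _ => hgnn j) hgsummable
      _ = R := by
          rw [hRdef, Summable.tsum_add ((h1.mul_left _).add h3) (h2.mul_left _),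
            Summable.tsum_add (h1.mul_left _) h3, tsum_mul_left, tsum_mul_left]
  have hA0 : 0 ≤ A 0 := by
    have h0 : A 0 = θ 0 ^ (-γ) * (P (x 0) + f (x 0) - Fstar) + τ*L*breg φ gφ xstar (z 0) := by
      rw [hAdef]
    rw [h0, hθ0eq, Real.one_rpow, one_mul]
    have := hFlb 0
    have := hB0 0
    nlinarith
  have hR0 : 0 ≤ R := by simpa using hrle 0
  have hBnn : 0 ≤ A 0 + R := by linarith
  refine ⟨(α - 1) ^ γ * (A 0 + R),
    mul_nonneg (Real.rpow_nonneg (by linarith) _) hBnn, ?_⟩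
  intro k hk
  have hθp : 0 < θ (k-1) := (hθmem (k-1)).1
  have hAk : θ (k-1) ^ (-γ) * (P (x k) + f (x k) - Fstar) ≤ A 0 + R := by
    have hAkdef : A k = θ (k-1) ^ (-γ) * (P (x k) + f (x k) - Fstar)
        + τ*L*breg φ gφ xstar (z k) := by rw [hAdef]
    have h1' := hAsum k
    have h2' := hrle k
    have h3' : 0 ≤ τ*L*breg φ gφ xstar (z k) := mul_nonneg hτL (hB0 k)
    rw [hAkdef] at h1'
    linarith
  have he : P (x k) + f (x k) - Fstar ≤ θ (k-1) ^ γ * (A 0 + R) := by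
    have hid : θ (k-1) ^ γ * (θ (k-1) ^ (-γ) * (P (x k) + f (x k) - Fstar))
        = P (x k) + f (x k) - Fstar := by
      rw [← mul_assoc, ← Real.rpow_add hθp]
      norm_num
    calc P (x k) + f (x k) - Fstar
        = θ (k-1) ^ γ * (θ (k-1) ^ (-γ) * (P (x k) + f (x k) - Fstar)) := hid.symm
      _ ≤ θ (k-1) ^ γ * (A 0 + R) :=
          mul_le_mul_of_nonneg_left hAk (Real.rpow_nonneg hθp.le _)
  have hkR : (1:ℝ) ≤ (k:ℝ) := by exact_mod_cast hk
  have hθb : θ (k-1) ≤ (α - 1) / (k:ℝ) := by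
    rcases eq_or_lt_of_le hk with h1' | h2'
    · rw [← h1']
      simp only [Nat.sub_self, hθ0eq]
      rw [Nat.cast_one, div_one]
      linarith
    · have hk1 : 1 ≤ k - 1 := by omega
      have hle := hθle (k-1) hk1
      have hcast : ((k - 1 : ℕ) : ℝ) = (k : ℝ) - 1 := by
        rw [Nat.cast_sub hk, Nat.cast_one]
      rw [hcast] at hle
      have hkpos : (0:ℝ) < k := by linarith
      calc θ (k-1) ≤ (α-1)/((k:ℝ)-1+α-1) := hle
        _ ≤ (α-1)/(k:ℝ) :=
          div_le_div_of_nonneg_left (by linarith) hkpos (by linarith)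
  have hfin : θ (k-1) ^ γ ≤ ((α-1)/(k:ℝ)) ^ γ :=
    Real.rpow_le_rpow hθp.le hθb hγ0
  have hkpos : (0:ℝ) < k := by linarith
  calc P (x k) + f (x k) - Fstar
      ≤ θ (k-1) ^ γ * (A 0 + R) := he
    _ ≤ ((α-1)/(k:ℝ)) ^ γ * (A 0 + R) := mul_le_mul_of_nonneg_right hfin hBnn
    _ = (α - 1) ^ γ * (A 0 + R) / (k:ℝ) ^ γ := by
        rw [Real.div_rpow (by linarith) hkpos.le]; ring
end
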